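/- arXiv:2202.10283 — 9 statements merged into one kernel-verified Lean document; each statement's English description precedes it below -/
import Mathlib

section
/- Let G be a topological group acting continuously and freely on a topological space M, and let H be a closed normal subgroup of G. Then the action of G on M is proper if and only if the action of H on M is proper and the induced action of the quotient group G/H on the orbit space M/H is proper. -/
open Filter Topology Set

/-- Key lemma for the converse direction: if `H` acts properly on `M`, the action of `G` is
free, and an ultrafilter `𝒲` on `G × M` satisfies `g • m → m₂`, `m → m₂` and `⟦g⟧ → 1` in
`G ⧸ H`, then `g → 1` in `G`. -/
theorem aux_key {G M : Type*} [Group G] [TopologicalSpace G] [IsTopologicalGroup G]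
    [TopologicalSpace M] [MulAction G M] [ContinuousSMul G M]
    (hfree : ∀ (g : G) (m : M), g • m = m → g = 1)
    (H : Subgroup G) [H.Normal]
    (hH : IsProperMap (fun hm : H × M => (hm.1 • hm.2, hm.2)))
    (m₂ : M) (𝒲 : Ultrafilter (G × M))
    (h1 : Tendsto (fun p : G × M => p.1 • p.2) 𝒲 (𝓝 m₂))
    (h2 : Tendsto (fun p : G × M => p.2) 𝒲 (𝓝 m₂))
    (h3 : Tendsto (fun p : G × M => ((p.1 : G ⧸ H))) 𝒲 (𝓝 1)) :
    Tendsto (fun p : G × M => p.1) 𝒲 (𝓝 (1 : G)) := by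
  classical
  set T : Set G → Set (G × M) → Set (H × M) := fun U W =>
    {z | ∃ g m u, (g, m) ∈ W ∧ u ∈ U ∧ g = (z.1 : G) * u ∧ z.2 = u • m} with hTdef
  have hmono : ∀ U U' W W', U ⊆ U' → W ⊆ W' → T U W ⊆ T U' W' := by
    rintro U U' W W' hU hW z ⟨g, m, u, hgm, hu, e1, e2⟩
    exact ⟨g, m, u, hW hgm, hU hu, e1, e2⟩
  have hne : ∀ U ∈ 𝓝 (1 : G), ∀ W ∈ 𝒲, (T U W).Nonempty := by
    intro U hU W hW
    have hUim : (QuotientGroup.mk '' U : Set (G ⧸ H)) ∈ 𝓝 (1 : G ⧸ H) := by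
      have := (QuotientGroup.isOpenQuotientMap_mk (N := H)).isOpenMap.image_mem_nhds hU
      simpa using this
    have hS : {p : G × M | ((p.1 : G ⧸ H)) ∈ QuotientGroup.mk '' U} ∈ 𝒲 := h3 hUim
    obtain ⟨⟨g, m⟩, hgmW, hgS⟩ := Ultrafilter.nonempty_of_mem (𝒲.inter_mem hW hS)
    obtain ⟨u, hu, hqu⟩ := hgS
    have hmem : g * u⁻¹ ∈ H := by
      have h' : g⁻¹ * u ∈ H := QuotientGroup.eq.mp hqu.symm
      have h'' : u⁻¹ * g ∈ H := by simpa using H.inv_mem h'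
      have := (‹H.Normal›).conj_mem _ h'' u
      simpa [mul_assoc] using this
    exact ⟨(⟨g * u⁻¹, hmem⟩, u • m), g, m, u, hgmW, hu, by group, rfl⟩
  let ι := {p : Set G × Set (G × M) // p.1 ∈ 𝓝 (1 : G) ∧ p.2 ∈ 𝒲}
  haveI : Nonempty ι := ⟨⟨(Set.univ, Set.univ), univ_mem, univ_mem⟩⟩
  let f : ι → Filter (H × M) := fun p => 𝓟 (T p.1.1 p.1.2)
  have hdir : Directed (fun x1 x2 => x1 ≥ x2) f := by
    rintro ⟨⟨U, W⟩, hU, hW⟩ ⟨⟨U', W'⟩, hU', hW'⟩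
    refine ⟨⟨(U ∩ U', W ∩ W'), inter_mem hU hU', 𝒲.inter_mem hW hW'⟩,
      principal_mono.mpr (hmono _ _ _ _ inter_subset_left inter_subset_left),
      principal_mono.mpr (hmono _ _ _ _ inter_subset_right inter_subset_right)⟩
  have hZne : (⨅ i, f i).NeBot := by
    rcases hne Set.univ univ_mem Set.univ univ_mem with ⟨z₀, -⟩
    haveI : Nonempty (H × M) := ⟨z₀⟩
    exact iInf_neBot_of_directed hdir fun i =>
      principal_neBot_iff.mpr (hne _ i.2.1 _ i.2.2)
  haveI := hZne
  set 𝒵 : Ultrafilter (H × M) := Ultrafilter.of (⨅ i, f i) with h𝒵def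
  have hZle : (𝒵 : Filter (H × M)) ≤ ⨅ i, f i := Ultrafilter.of_le _
  have hTmem : ∀ U ∈ 𝓝 (1 : G), ∀ W ∈ 𝒲, T U W ∈ 𝒵 := by
    intro U hU W hW
    have : (⨅ i, f i) ≤ f ⟨(U, W), hU, hW⟩ := iInf_le f _
    exact hZle (this (mem_principal_self _))
  -- 𝒵 tends to (m₂, m₂) under the H-action pair map
  have ha : Tendsto (fun z : H × M => z.1 • z.2) 𝒵 (𝓝 m₂) := by
    intro A hA
    rw [mem_map]
    refine mem_of_superset (hTmem Set.univ univ_mem _ (h1 hA)) ?_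
    rintro z ⟨g, m, u, hgm, -, e1, e2⟩
    have : z.1 • z.2 = g • m := by
      rw [e2, e1]
      show (z.1 : G) • (u • m) = ((z.1 : G) * u) • m
      rw [mul_smul]
    simpa [this] using hgm
  have hb : Tendsto (fun z : H × M => z.2) 𝒵 (𝓝 m₂) := by
    intro B hB
    rw [mem_map]
    have hc : Tendsto (fun p : G × M => p.1 • p.2) (𝓝 ((1 : G), m₂)) (𝓝 m₂) := by
      simpa using continuous_smul.tendsto ((1 : G), m₂)
    obtain ⟨U, hU, V, hV, hUV⟩ := mem_nhds_prod_iff.mp (hc hB)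
    refine mem_of_superset (hTmem U hU _ (h2 hV)) ?_
    rintro z ⟨g, m, u, hgm, hu, -, e2⟩
    have : u • m ∈ B := hUV (Set.mk_mem_prod hu hgm)
    simpa [e2] using this
  have hpair : Tendsto (fun z : H × M => (z.1 • z.2, z.2)) 𝒵 (𝓝 (m₂, m₂)) :=
    ha.prodMk_nhds hb
  obtain ⟨⟨h₀, x₀⟩, hfib, hlim⟩ := (isProperMap_iff_ultrafilter.mp hH).2 hpair
  have hx₀ : x₀ = m₂ := (Prod.mk.injEq _ _ _ _).mp hfib |>.2
  have hone : (h₀ : G) = 1 := by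
    apply hfree (h₀ : G) m₂
    have := (Prod.mk.injEq _ _ _ _).mp hfib |>.1
    rw [hx₀] at this
    exact this
  have hfstZ : Tendsto (fun z : H × M => (z.1 : G)) 𝒵 (𝓝 (1 : G)) := by
    have : Tendsto (fun z : H × M => z.1) 𝒵 (𝓝 h₀) :=
      (continuous_fst.tendsto _).mono_left hlim
    have := (continuous_subtype_val.tendsto h₀).comp this
    rw [hone] at this
    exact this
  -- conclude
  intro N hN
  rw [mem_map]
  have hc : Tendsto (fun p : G × G => p.1 * p.2) (𝓝 ((1 : G), (1 : G))) (𝓝 (1 : G)) := by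
    simpa using continuous_mul.tendsto ((1 : G), (1 : G))
  obtain ⟨N', hN', U, hU, hNU⟩ := mem_nhds_prod_iff.mp (hc hN)
  by_contra hcon
  have hWc : {p : G × M | p.1 ∈ N}ᶜ ∈ 𝒲 := Ultrafilter.compl_mem_iff_notMem.mpr hcon
  have hA : T U {p : G × M | p.1 ∈ N}ᶜ ∈ 𝒵 := hTmem U hU _ hWc
  have hB : {z : H × M | (z.1 : G) ∈ N'} ∈ 𝒵 := hfstZ hN'
  obtain ⟨z, hzA, hzB⟩ := Ultrafilter.nonempty_of_mem (𝒵.inter_mem hA hB)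
  obtain ⟨g, m, u, hgm, hu, e1, -⟩ := hzA
  exact hgm (by rw [e1]; exact hNU (Set.mk_mem_prod hzB hu))

/-- Let `G` be a topological group acting continuously and freely on a
topological space `M`, and let `H` be a closed normal subgroup of `G`. Then the action of `G`
on `M` is proper if and only if the action of `H` on `M` is proper and the induced action of
the quotient group `G ⧸ H` on the orbit space `M / H` is proper.

Here an action is proper when the map `(g, m) ↦ (g • m, m)` is a proper map, the orbit space
`M / H` is `Quotient (MulAction.orbitRel H M)` with the quotient topology, and the induced
action of `G ⧸ H` on `M / H` is encoded by the map `σ` satisfying `σ ⟦g⟧ ⟦m⟧ = ⟦g • m⟧`. -/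
theorem statement0 {G M : Type*} [Group G] [TopologicalSpace G] [IsTopologicalGroup G]
    [TopologicalSpace M] [MulAction G M] [ContinuousSMul G M]
    (hfree : ∀ (g : G) (m : M), g • m = m → g = 1)
    (H : Subgroup G) [H.Normal] (hHclosed : IsClosed (H : Set G))
    (σ : G ⧸ H → Quotient (MulAction.orbitRel H M) → Quotient (MulAction.orbitRel H M))
    (hσ : ∀ (g : G) (m : M),
      σ ((g : G ⧸ H)) (Quotient.mk (MulAction.orbitRel H M) m)
        = Quotient.mk (MulAction.orbitRel H M) (g • m)) :
    IsProperMap (fun gm : G × M => (gm.1 • gm.2, gm.2)) ↔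
      IsProperMap (fun hm : H × M => (hm.1 • hm.2, hm.2)) ∧
        IsProperMap (fun p : (G ⧸ H) × Quotient (MulAction.orbitRel H M) =>
          (σ p.1 p.2, p.2)) := by
  classical
  set π : M → Quotient (MulAction.orbitRel H M) := Quotient.mk (MulAction.orbitRel H M)
    with hπdef
  set πG : G → G ⧸ H := QuotientGroup.mk with hπGdef
  have oq2 : IsOpenQuotientMap π := MulAction.isOpenQuotientMap_quotientMk
  have oq1 : IsOpenQuotientMap πG := QuotientGroup.isOpenQuotientMap_mk
  have oq : IsOpenQuotientMap (Prod.map πG π) := oq1.prodMap oq2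
  have hquot : ∀ a b : M, π a = π b ↔ ∃ h : H, h • b = a := by
    intro a b
    rw [hπdef]
    show Quotient.mk'' a = Quotient.mk'' b ↔ _
    rw [Quotient.eq'', MulAction.orbitRel_apply, MulAction.mem_orbit_iff]
  constructor
  · intro hG
    haveI hPS : ProperSMul G M := ⟨hG⟩
    constructor
    · exact (properSMul_of_isClosedEmbedding (G := G) (X := M) H.subtype
        hHclosed.isClosedEmbedding_subtypeVal fun _ _ => rfl).isProperMap_smul_pair
    · rw [isProperMap_iff_ultrafilter]
      constructor
      · rw [oq.isQuotientMap.continuous_iff]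
        have hc : (fun p : (G ⧸ H) × Quotient (MulAction.orbitRel H M) => (σ p.1 p.2, p.2))
            ∘ (Prod.map πG π) = fun p : G × M => (π (p.1 • p.2), π p.2) := by
          funext p
          simp only [Function.comp_apply, Prod.map, hπGdef, hπdef]
          rw [hσ p.1 p.2]
        rw [hc]
        exact ((oq2.continuous.comp (continuous_fst.smul continuous_snd)).prodMk
          (oq2.continuous.comp continuous_snd))
      · rintro 𝒰 ⟨y₁, y₂⟩ h𝒰
        obtain ⟨m₁, hm₁⟩ := Quotient.exists_rep y₁
        obtain ⟨m₂, hm₂⟩ := Quotient.exists_rep y₂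
        have hne : NeBot (comap (Prod.map πG π) ↑𝒰
            ⊓ comap (fun p : G × M => (p.1 • p.2, p.2)) (𝓝 (m₁, m₂))) := by
          rw [neBot_iff]
          intro hbot
          rw [inf_eq_bot_iff] at hbot
          obtain ⟨Us, hUs, Vs, hVs, hdisj⟩ := hbot
          obtain ⟨W, hW, hWsub⟩ := mem_comap.mp hUs
          obtain ⟨Nn, hNn, hNsub⟩ := mem_comap.mp hVs
          obtain ⟨A, hA, B, hB, hAB⟩ := mem_nhds_prod_iff.mp hNn
          have hπA : π '' A ∈ 𝓝 y₁ := by rw [← hm₁]; exact oq2.isOpenMap.image_mem_nhds hA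
          have hπB : π '' B ∈ 𝓝 y₂ := by rw [← hm₂]; exact oq2.isOpenMap.image_mem_nhds hB
          have hpre : {p : (G ⧸ H) × Quotient (MulAction.orbitRel H M) |
              (σ p.1 p.2, p.2) ∈ (π '' A) ×ˢ (π '' B)} ∈ 𝒰 :=
            h𝒰 (prod_mem_nhds hπA hπB)
          obtain ⟨⟨gq, mq⟩, hWmem, hKm⟩ := Ultrafilter.nonempty_of_mem (𝒰.inter_mem hW hpre)
          simp only [Set.mem_setOf_eq, Set.mem_prod] at hKm
          obtain ⟨b, hbB, hb⟩ := hKm.2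
          obtain ⟨g, hg⟩ := QuotientGroup.mk_surjective (s := H) gq
          have hσval : σ gq mq = π (g • b) := by rw [← hg, ← hb]; exact hσ g b
          have hmemA : σ gq mq ∈ π '' A := hKm.1
          rw [hσval] at hmemA
          obtain ⟨a, haA, ha⟩ := hmemA
          obtain ⟨h, hh⟩ := (hquot a (g • b)).mp ha
          have hπGh : πG ((h : G) * g) = gq := by
            rw [hπGdef]
            show ((((h : G) * g) : G) : G ⧸ H) = gq
            rw [QuotientGroup.mk_mul, (QuotientGroup.eq_one_iff (h : G)).mpr h.2, one_mul]
            exact hg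
          have hptV : (((h : G) * g, b) : G × M) ∈ Vs := by
            apply hNsub
            show ((((h : G) * g) • b, b)) ∈ Nn
            apply hAB
            refine ⟨?_, hbB⟩
            show ((h : G) * g) • b ∈ A
            rw [mul_smul]
            have : (h : G) • (g • b) = a := hh
            rw [this]
            exact haA
          have hptU : (((h : G) * g, b) : G × M) ∈ Us := by
            apply hWsub
            show (πG ((h : G) * g), π b) ∈ W
            rw [hπGh, hb]
            exact hWmem
          have : (((h : G) * g, b) : G × M) ∈ Us ∩ Vs := ⟨hptU, hptV⟩
          rw [hdisj] at this
          exact this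
        haveI := hne
        set 𝒱 : Ultrafilter (G × M) := Ultrafilter.of (comap (Prod.map πG π) ↑𝒰
            ⊓ comap (fun p : G × M => (p.1 • p.2, p.2)) (𝓝 (m₁, m₂))) with h𝒱
        have h𝒱le := Ultrafilter.of_le (comap (Prod.map πG π) ↑𝒰
            ⊓ comap (fun p : G × M => (p.1 • p.2, p.2)) (𝓝 (m₁, m₂)))
        have hVq : (𝒱 : Filter (G × M)) ≤ comap (Prod.map πG π) ↑𝒰 :=
          h𝒱le.trans inf_le_left
        have hVΦ : Tendsto (fun p : G × M => (p.1 • p.2, p.2)) 𝒱 (𝓝 (m₁, m₂)) :=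
          tendsto_iff_comap.mpr (h𝒱le.trans inf_le_right)
        obtain ⟨⟨g₀, m₀⟩, hfib, hlim⟩ := (isProperMap_iff_ultrafilter.mp hG).2 hVΦ
        have e1 : g₀ • m₀ = m₁ := ((Prod.mk.injEq _ _ _ _).mp hfib).1
        have e2 : m₀ = m₂ := ((Prod.mk.injEq _ _ _ _).mp hfib).2
        refine ⟨(πG g₀, π m₀), ?_, ?_⟩
        · show (σ (πG g₀) (π m₀), π m₀) = (y₁, y₂)
          rw [hπGdef, hπdef]
          rw [hσ g₀ m₀, e1]
          rw [Prod.mk.injEq]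
          exact ⟨hm₁, by rw [e2]; exact hm₂⟩
        · have hmapeq : map (Prod.map πG π) ↑𝒱 = (𝒰 : Filter _) :=
            Ultrafilter.unique 𝒰 (map_le_iff_le_comap.mpr hVq)
          calc (𝒰 : Filter _) = map (Prod.map πG π) ↑𝒱 := hmapeq.symm
            _ ≤ map (Prod.map πG π) (𝓝 (g₀, m₀)) := map_mono hlim
            _ ≤ 𝓝 (Prod.map πG π (g₀, m₀)) := (oq.continuous.tendsto _)
  · rintro ⟨hHp, hQp⟩
    rw [isProperMap_iff_ultrafilter]
    refine ⟨by fun_prop, ?_⟩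
    rintro 𝒱 ⟨m₁, m₂⟩ hconv
    have hΨ : Tendsto (fun p : (G ⧸ H) × Quotient (MulAction.orbitRel H M) =>
        (σ p.1 p.2, p.2)) (Ultrafilter.map (Prod.map πG π) 𝒱) (𝓝 (π m₁, π m₂)) := by
      show Tendsto ((fun p : (G ⧸ H) × Quotient (MulAction.orbitRel H M) =>
        (σ p.1 p.2, p.2)) ∘ (Prod.map πG π)) ↑𝒱 _
      have hcomp : (fun p : (G ⧸ H) × Quotient (MulAction.orbitRel H M) =>
          (σ p.1 p.2, p.2)) ∘ (Prod.map πG π)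
          = (Prod.map π π) ∘ (fun p : G × M => (p.1 • p.2, p.2)) := by
        funext p
        simp only [Function.comp_apply, Prod.map, hπGdef, hπdef]
        rw [hσ p.1 p.2]
      rw [hcomp]
      exact (((oq2.continuous.prodMap oq2.continuous).tendsto (m₁, m₂))).comp hconv
    obtain ⟨⟨gq, yq⟩, hfib, hlim⟩ := (isProperMap_iff_ultrafilter.mp hQp).2 hΨ
    have hσfib : σ gq yq = π m₁ := ((Prod.mk.injEq _ _ _ _).mp hfib).1
    have hyq : yq = π m₂ := ((Prod.mk.injEq _ _ _ _).mp hfib).2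
    subst hyq
    obtain ⟨g₁, hg₁⟩ := QuotientGroup.mk_surjective (s := H) gq
    have hπg₁ : π (g₁ • m₂) = π m₁ := by
      have hx := hσ g₁ m₂
      rw [hπGdef] at hx
      rw [hg₁] at hx
      rw [← hx]
      exact hσfib
    obtain ⟨h, hh⟩ := (hquot m₁ (g₁ • m₂)).mp hπg₁.symm
    have hg₀m : ((h : G) * g₁) • m₂ = m₁ := by
      rw [mul_smul]
      exact hh
    set g₀ : G := (h : G) * g₁ with hg₀def
    have hg₀q : πG g₀ = gq := by
      rw [hπGdef, hg₀def]
      show ((((h : G) * g₁) : G) : G ⧸ H) = gq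
      rw [QuotientGroup.mk_mul, (QuotientGroup.eq_one_iff (h : G)).mpr h.2, one_mul]
      exact hg₁
    set 𝒲 : Ultrafilter (G × M) :=
      Ultrafilter.map (fun p : G × M => (g₀⁻¹ * p.1, p.2)) 𝒱 with h𝒲def
    have w2 : Tendsto (fun p : G × M => p.2) 𝒲 (𝓝 m₂) := by
      show Tendsto ((fun p : G × M => p.2) ∘ (fun p : G × M => (g₀⁻¹ * p.1, p.2))) ↑𝒱 _
      have : ((fun p : G × M => p.2) ∘ (fun p : G × M => (g₀⁻¹ * p.1, p.2)))
          = (fun x : M × M => x.2) ∘ (fun p : G × M => (p.1 • p.2, p.2)) := rfl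
      rw [this]
      exact (continuous_snd.tendsto _).comp hconv
    have w1 : Tendsto (fun p : G × M => p.1 • p.2) 𝒲 (𝓝 m₂) := by
      show Tendsto ((fun p : G × M => p.1 • p.2) ∘ (fun p : G × M => (g₀⁻¹ * p.1, p.2))) ↑𝒱 _
      have hcomp : ((fun p : G × M => p.1 • p.2) ∘ (fun p : G × M => (g₀⁻¹ * p.1, p.2)))
          = (fun x : M × M => g₀⁻¹ • x.1) ∘ (fun p : G × M => (p.1 • p.2, p.2)) := by
        funext p
        simp [mul_smul]
      rw [hcomp]
      have hc : Tendsto (fun x : M × M => g₀⁻¹ • x.1) (𝓝 (m₁, m₂)) (𝓝 m₂) := by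
        have hcc : Continuous (fun x : M × M => g₀⁻¹ • x.1) :=
          continuous_const.smul continuous_fst
        have := hcc.tendsto (m₁, m₂)
        rwa [show g₀⁻¹ • m₁ = m₂ by rw [← hg₀m, inv_smul_smul]] at this
      exact hc.comp hconv
    have hfst : Tendsto (Prod.map πG π) ↑𝒱 (𝓝 (gq, π m₂)) := by
      rw [Tendsto, ← Ultrafilter.coe_map]
      exact hlim
    have hfstG : Tendsto (fun p : G × M => πG p.1) ↑𝒱 (𝓝 gq) :=
      (continuous_fst.tendsto _).comp hfst
    have w3 : Tendsto (fun p : G × M => ((p.1 : G ⧸ H))) 𝒲 (𝓝 1) := by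
      show Tendsto ((fun p : G × M => ((p.1 : G ⧸ H)))
        ∘ (fun p : G × M => (g₀⁻¹ * p.1, p.2))) ↑𝒱 _
      have hcomp : ((fun p : G × M => ((p.1 : G ⧸ H)))
          ∘ (fun p : G × M => (g₀⁻¹ * p.1, p.2)))
          = (fun x : G ⧸ H => gq⁻¹ * x) ∘ (fun p : G × M => πG p.1) := by
        funext p
        simp only [Function.comp_apply, hπGdef]
        show (((g₀⁻¹ * p.1 : G)) : G ⧸ H) = gq⁻¹ * ((p.1 : G) : G ⧸ H)
        rw [QuotientGroup.mk_mul, QuotientGroup.mk_inv]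
        rw [show ((g₀ : G ⧸ H)) = gq from hg₀q]
      rw [hcomp]
      have : Tendsto (fun x : G ⧸ H => gq⁻¹ * x) (𝓝 gq) (𝓝 (1 : G ⧸ H)) := by
        have hcc : Continuous (fun x : G ⧸ H => gq⁻¹ * x) :=
          continuous_const.mul continuous_id
        have := hcc.tendsto gq
        simpa using this
      exact this.comp hfstG
    have hkey : Tendsto (fun p : G × M => p.1) 𝒲 (𝓝 (1 : G)) :=
      aux_key hfree H hHp m₂ 𝒲 w1 w2 w3
    have hWle : (𝒲 : Filter (G × M)) ≤ 𝓝 ((1 : G), m₂) := by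
      rw [nhds_prod_eq, le_prod]
      exact ⟨hkey, w2⟩
    refine ⟨(g₀, m₂), by rw [Prod.mk.injEq]; exact ⟨hg₀m, rfl⟩, ?_⟩
    have hVeq : (𝒱 : Filter (G × M)) = map (fun p : G × M => (g₀ * p.1, p.2)) ↑𝒲 := by
      rw [h𝒲def, Ultrafilter.coe_map, map_map]
      have : ((fun p : G × M => (g₀ * p.1, p.2)) ∘ (fun p : G × M => (g₀⁻¹ * p.1, p.2)))
          = id := by
        funext p
        simp [← mul_assoc]
      rw [this, map_id]
    rw [hVeq]
    calc map (fun p : G × M => (g₀ * p.1, p.2)) ↑𝒲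
        ≤ map (fun p : G × M => (g₀ * p.1, p.2)) (𝓝 ((1 : G), m₂)) := map_mono hWle
      _ ≤ 𝓝 ((g₀ * 1 : G), m₂) := by
          have hc : Continuous (fun p : G × M => (g₀ * p.1, p.2)) := by fun_prop
          exact hc.tendsto _
      _ = 𝓝 (g₀, m₂) := by rw [mul_one]
end

section
/- Let n ≥ 1 and let g, j, and the subalgebra 𝔫 be the normal j-algebra data of the n-dimensional unit ball described in the context. Then every Lie subalgebra 𝔫' of 𝔫 with 𝔫' ∩ j(𝔫') = {0} is contained in a Lie subalgebra 𝔫̂' of 𝔫 with 𝔫̂' ∩ j(𝔫̂') = {0} and dim_ℝ 𝔫̂' = n. Moreover, if 𝔫' is abelian, then 𝔫̂' can be chosen to be abelian. -/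
set_option maxHeartbeats 2000000 in
/-- Let `g` (with linear map `j` and nilradical `𝔫`) be the normal
`j`-algebra of the `n`-dimensional unit ball: `g` has basis
`α, ζ, ξ_1, …, ξ_{n-1}, ξ'_1, …, ξ'_{n-1}` with only nonvanishing brackets
`[ξ_k, ξ'_k] = ζ`, `[α, ξ_k] = -ξ_k`, `[α, ξ'_k] = -ξ'_k`, `[α, ζ] = -2ζ`, and
`j(ζ) = α`, `j(α) = -ζ`, `j(ξ_k) = ξ'_k`, `j(ξ'_k) = -ξ_k`; `𝔫` is spanned by the
`ξ_k, ξ'_k, ζ`. Then every totally real Lie subalgebra `𝔫'` of `𝔫` is contained in a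
maximal totally real subalgebra `𝔫̂'` of `𝔫` (totally real with `dim_ℝ 𝔫̂' = n`);
moreover if `𝔫'` is abelian then `𝔫̂'` can be chosen abelian. -/
theorem statement2 (n : ℕ) (hn : 1 ≤ n) (g : Type*) [LieRing g] [LieAlgebra ℝ g]
    (α ζ : g) (ξ ξ' : Fin (n - 1) → g)
    (hindep : LinearIndependent ℝ (Sum.elim ![α, ζ] (Sum.elim ξ ξ')))
    (hspan : Submodule.span ℝ (Set.range (Sum.elim ![α, ζ] (Sum.elim ξ ξ'))) = ⊤)
    (hb1 : ∀ k, ⁅ξ k, ξ' k⁆ = ζ)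
    (hb2 : ∀ k l, k ≠ l → ⁅ξ k, ξ' l⁆ = (0 : g))
    (hb3 : ∀ k l, ⁅ξ k, ξ l⁆ = (0 : g))
    (hb4 : ∀ k l, ⁅ξ' k, ξ' l⁆ = (0 : g))
    (hb5 : ∀ k, ⁅α, ξ k⁆ = -ξ k)
    (hb6 : ∀ k, ⁅α, ξ' k⁆ = -ξ' k)
    (hb7 : ⁅α, ζ⁆ = (-2 : ℝ) • ζ)
    (hb8 : ∀ k, ⁅ζ, ξ k⁆ = (0 : g))
    (hb9 : ∀ k, ⁅ζ, ξ' k⁆ = (0 : g))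
    (j : g →ₗ[ℝ] g)
    (hj1 : j ζ = α) (hj2 : j α = -ζ)
    (hj3 : ∀ k, j (ξ k) = ξ' k) (hj4 : ∀ k, j (ξ' k) = -ξ k)
    (𝔫 : LieSubalgebra ℝ g)
    (h𝔫 : 𝔫.toSubmodule =
      Submodule.span ℝ (Set.range ξ ∪ Set.range ξ' ∪ {ζ}))
    (𝔫' : LieSubalgebra ℝ g) (h'le : 𝔫' ≤ 𝔫)
    (h'tr : 𝔫'.toSubmodule ⊓ (𝔫'.toSubmodule.map j) = ⊥) :
    (∃ m : LieSubalgebra ℝ g, 𝔫' ≤ m ∧ m ≤ 𝔫 ∧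
        m.toSubmodule ⊓ (m.toSubmodule.map j) = ⊥ ∧ Module.finrank ℝ m = n) ∧
      ((∀ x ∈ 𝔫', ∀ y ∈ 𝔫', ⁅x, y⁆ = (0 : g)) →
        ∃ m : LieSubalgebra ℝ g, 𝔫' ≤ m ∧ m ≤ 𝔫 ∧
          m.toSubmodule ⊓ (m.toSubmodule.map j) = ⊥ ∧ Module.finrank ℝ m = n ∧
          ∀ x ∈ m, ∀ y ∈ m, ⁅x, y⁆ = (0 : g)) := by
  classical
  set f := Sum.elim ![α, ζ] (Sum.elim ξ ξ') with hf
  let b : Module.Basis (Fin 2 ⊕ (Fin (n - 1) ⊕ Fin (n - 1))) ℝ g := Module.Basis.mk hindep hspan.ge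
  haveI : Module.Finite ℝ g := Module.Finite.of_basis b
  have hbα : b (Sum.inl 0) = α := by simp [b, hf]
  have hbζ : b (Sum.inl 1) = ζ := by simp [b, hf]
  have hbξ : ∀ k, b (Sum.inr (Sum.inl k)) = ξ k := fun k => by simp [b, hf]
  have hbξ' : ∀ k, b (Sum.inr (Sum.inr k)) = ξ' k := fun k => by simp [b, hf]
  let cα : g →ₗ[ℝ] ℝ := b.coord (Sum.inl 0)
  let cζ : g →ₗ[ℝ] ℝ := b.coord (Sum.inl 1)
  have hcζζ : cζ ζ = 1 := by
    rw [← hbζ]; simp [cζ, Module.Basis.coord_apply]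
  have hcζα : cζ α = 0 := by
    rw [← hbα]; simp [cζ, Module.Basis.coord_apply, Module.Basis.repr_self]
  have hcζξ : ∀ k, cζ (ξ k) = 0 := fun k => by
    rw [← hbξ k]; simp [cζ, Module.Basis.coord_apply, Module.Basis.repr_self]
  have hcζξ' : ∀ k, cζ (ξ' k) = 0 := fun k => by
    rw [← hbξ' k]; simp [cζ, Module.Basis.coord_apply, Module.Basis.repr_self]
  have hcαα : cα α = 1 := by rw [← hbα]; simp [cα, Module.Basis.coord_apply]
  have hcαζ : cα ζ = 0 := by
    rw [← hbζ]; simp [cα, Module.Basis.coord_apply, Module.Basis.repr_self]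
  have hcαξ : ∀ k, cα (ξ k) = 0 := fun k => by
    rw [← hbξ k]; simp [cα, Module.Basis.coord_apply, Module.Basis.repr_self]
  have hcαξ' : ∀ k, cα (ξ' k) = 0 := fun k => by
    rw [← hbξ' k]; simp [cα, Module.Basis.coord_apply, Module.Basis.repr_self]
  -- the subspace V spanned by the ξ, ξ'
  set e : (Fin (n-1) ⊕ Fin (n-1)) → g := Sum.elim ξ ξ' with he
  set V : Submodule ℝ g := Submodule.span ℝ (Set.range ξ ∪ Set.range ξ') with hV
  have hVe : V = Submodule.span ℝ (Set.range e) := by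
    rw [hV, he, Set.Sum.elim_range]
  have hξV : ∀ k, ξ k ∈ V := fun k =>
    Submodule.subset_span (Set.mem_union_left _ (Set.mem_range_self k))
  have hξ'V : ∀ k, ξ' k ∈ V := fun k =>
    Submodule.subset_span (Set.mem_union_right _ (Set.mem_range_self k))
  have hVc : ∀ x ∈ V, cζ x = 0 ∧ cα x = 0 := by
    have : V ≤ LinearMap.ker cζ ⊓ LinearMap.ker cα := by
      rw [hV]; apply Submodule.span_le.mpr
      rintro x (⟨k, rfl⟩ | ⟨k, rfl⟩) <;>
        exact ⟨by simp [LinearMap.mem_ker, hcζξ, hcζξ'], by simp [LinearMap.mem_ker, hcαξ, hcαξ']⟩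
    intro x hx
    obtain ⟨h1, h2⟩ := this hx
    exact ⟨h1, h2⟩
  have hjVmap : Submodule.map j V ≤ V := by
    rw [hV, Submodule.map_span]; apply Submodule.span_le.mpr
    rintro x2 ⟨x, hx, rfl⟩
    rcases hx with ⟨k, rfl⟩ | ⟨k, rfl⟩
    · rw [hj3]; exact hξ'V k
    · rw [hj4]; exact V.neg_mem (hξV k)
  have hjV : ∀ x ∈ V, j x ∈ V := fun x hx => hjVmap ⟨x, hx, rfl⟩
  have hjj : ∀ x : g, j (j x) = -x := by
    intro x
    have hx : x ∈ Submodule.span ℝ (Set.range f) := by rw [hspan]; trivial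
    induction hx using Submodule.span_induction with
    | mem x hx =>
      obtain ⟨i, rfl⟩ := hx
      rcases i with i | k | k
      · fin_cases i <;> simp [hf, hj1, hj2, hj3, hj4]
      · simp [hf, he, hj3, hj4]
      · simp [hf, he, hj3, hj4]
    | zero => simp
    | add x y hx hy ihx ihy => rw [map_add, map_add, ihx, ihy, neg_add]
    | smul t x hx ihx => rw [map_smul, map_smul, ihx, smul_neg]
  have hjinj : Function.Injective j := by
    intro x y hxy
    have := congrArg j hxy
    rw [hjj, hjj] at this
    exact neg_injective this
  have hζ𝔫 : ζ ∈ 𝔫 := by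
    rw [← LieSubalgebra.mem_toSubmodule, h𝔫]
    exact Submodule.subset_span (Set.mem_union_right _ rfl)
  have hV𝔫 : V ≤ 𝔫.toSubmodule := by
    rw [hV, h𝔫]; apply Submodule.span_le.mpr
    rintro x (⟨k, rfl⟩ | ⟨k, rfl⟩) <;>
      exact Submodule.subset_span (Set.mem_union_left _ (by simp))
  -- ζ is central in 𝔫
  have hζc : ∀ x ∈ 𝔫, ⁅ζ, x⁆ = (0 : g) := by
    intro x hx
    rw [← LieSubalgebra.mem_toSubmodule, h𝔫] at hx
    induction hx using Submodule.span_induction with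
    | mem x hx =>
      rcases hx with (⟨k, rfl⟩ | ⟨k, rfl⟩) | rfl
      · exact hb8 k
      · exact hb9 k
      · exact lie_self _
    | zero => simp
    | add x y hx hy ihx ihy => rw [lie_add, ihx, ihy, add_zero]
    | smul t x hx ihx => rw [lie_smul, ihx, smul_zero]
  have hζc' : ∀ x ∈ 𝔫, ⁅x, ζ⁆ = (0 : g) := by
    intro x hx
    rw [← lie_skew, hζc x hx, neg_zero]
  -- brackets of elements of 𝔫 lie in ℝ ∙ ζ
  have hbr : ∀ x ∈ 𝔫, ∀ y ∈ 𝔫, ⁅x, y⁆ ∈ Submodule.span ℝ ({ζ} : Set g) := by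
    intro x hx y hy
    rw [← LieSubalgebra.mem_toSubmodule, h𝔫] at hx hy
    induction hx using Submodule.span_induction with
    | mem x hx =>
      induction hy using Submodule.span_induction with
      | mem y hy =>
        rcases hx with (⟨k, rfl⟩ | ⟨k, rfl⟩) | rfl
        · rcases hy with (⟨l, rfl⟩ | ⟨l, rfl⟩) | rfl
          · rw [hb3]; exact Submodule.zero_mem _
          · by_cases hkl : k = l
            · subst hkl; rw [hb1]; exact Submodule.mem_span_singleton_self _
            · rw [hb2 k l hkl]; exact Submodule.zero_mem _
          · rw [← lie_skew, hb8 k, neg_zero]; exact Submodule.zero_mem _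
        · rcases hy with (⟨l, rfl⟩ | ⟨l, rfl⟩) | rfl
          · by_cases hkl : l = k
            · subst hkl
              rw [← lie_skew, hb1]
              exact Submodule.neg_mem _ (Submodule.mem_span_singleton_self _)
            · rw [← lie_skew, hb2 l k hkl, neg_zero]; exact Submodule.zero_mem _
          · rw [hb4]; exact Submodule.zero_mem _
          · rw [← lie_skew, hb9 k, neg_zero]; exact Submodule.zero_mem _
        · rcases hy with (⟨l, rfl⟩ | ⟨l, rfl⟩) | rfl
          · rw [hb8]; exact Submodule.zero_mem _
          · rw [hb9]; exact Submodule.zero_mem _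
          · rw [lie_self]; exact Submodule.zero_mem _
      | zero => simp
      | add y z hy hz ihy ihz => rw [lie_add]; exact Submodule.add_mem _ ihy ihz
      | smul t y hy ihy => rw [lie_smul]; exact Submodule.smul_mem _ t ihy
    | zero => simp
    | add x x2 hx hx2 ihx ihx2 => rw [add_lie]; exact Submodule.add_mem _ ihx ihx2
    | smul t x hx ihx => rw [smul_lie]; exact Submodule.smul_mem _ t ihx
  have hζrep : ∀ z ∈ Submodule.span ℝ ({ζ} : Set g), z = cζ z • ζ := by
    intro z hz
    obtain ⟨t, rfl⟩ := Submodule.mem_span_singleton.mp hz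
    rw [map_smul, smul_eq_mul, hcζζ, mul_one]
  have hbr' : ∀ x ∈ 𝔫, ∀ y ∈ 𝔫, ⁅x, y⁆ = cζ ⁅x, y⁆ • ζ := fun x hx y hy =>
    hζrep _ (hbr x hx y hy)
  have h𝔫α0 : ∀ x ∈ 𝔫, cα x = 0 := by
    intro x hx
    rw [← LieSubalgebra.mem_toSubmodule, h𝔫] at hx
    have hk : Submodule.span ℝ (Set.range ξ ∪ Set.range ξ' ∪ {ζ}) ≤ LinearMap.ker cα := by
      apply Submodule.span_le.mpr
      rintro x ((⟨k, rfl⟩ | ⟨k, rfl⟩) | rfl) <;>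
        simp [LinearMap.mem_ker, hcαξ, hcαξ', hcαζ]
    exact hk hx
  -- the bilinear form B x y = cζ ⁅x, j y⁆, positive definite on V
  let Bf : g →ₗ[ℝ] g →ₗ[ℝ] ℝ := LinearMap.mk₂ ℝ (fun x y => cζ ⁅x, j y⁆)
    (fun x x' y => by rw [add_lie, map_add])
    (fun t x y => by rw [smul_lie, map_smul])
    (fun x y y' => by rw [map_add, lie_add, map_add])
    (fun t x y => by rw [map_smul, lie_smul, map_smul])
  have hBf : ∀ x y, Bf x y = cζ ⁅x, j y⁆ := fun _ _ => rfl
  have hGram : ∀ i i', Bf (e i) (e i') = if i = i' then 1 else 0 := by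
    rintro (k | k) (l | l)
    · show cζ ⁅ξ k, j (ξ l)⁆ = _
      rw [hj3]
      by_cases hkl : k = l
      · subst hkl; rw [hb1]; simp [hcζζ]
      · rw [hb2 k l hkl]; simp [hkl]
    · show cζ ⁅ξ k, j (ξ' l)⁆ = _
      rw [hj4, lie_neg, hb3]; simp
    · show cζ ⁅ξ' k, j (ξ l)⁆ = _
      rw [hj3, hb4]; simp
    · show cζ ⁅ξ' k, j (ξ' l)⁆ = _
      rw [hj4, lie_neg]
      by_cases hkl : k = l
      · subst hkl
        have hz : ⁅ξ' k, ξ k⁆ = -ζ := by rw [← lie_skew, hb1]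
        rw [hz]; simp [hcζζ]
      · have hz : ⁅ξ' k, ξ l⁆ = 0 := by
          rw [← lie_skew, hb2 l k (Ne.symm hkl), neg_zero]
        rw [hz]; simp [hkl]
  have hpos : ∀ x ∈ V, Bf x x = 0 → x = 0 := by
    intro x hx hBxx
    rw [hVe] at hx
    obtain ⟨c, rfl⟩ := Submodule.mem_span_range_iff_exists_fun ℝ |>.mp hx
    have hexp : Bf (∑ i, c i • e i) (∑ i, c i • e i) = ∑ i, (c i) ^ 2 := by
      simp only [map_sum, LinearMap.sum_apply, map_smul, LinearMap.smul_apply, smul_eq_mul,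
        hGram, mul_ite, mul_one, mul_zero, Finset.sum_ite_eq, Finset.sum_ite_eq',
        Finset.mem_univ, if_true]
      simp [sq]
    rw [hexp] at hBxx
    have hci : ∀ i, c i = 0 := by
      intro i
      have h0 := (Finset.sum_eq_zero_iff_of_nonneg
        (fun i _ => sq_nonneg (c i))).mp hBxx i (Finset.mem_univ i)
      exact pow_eq_zero_iff two_ne_zero |>.mp h0
    simp [hci]
  have hei : LinearIndependent ℝ e := hindep.comp Sum.inr Sum.inr_injective
  have hVrank : Module.finrank ℝ V = (n - 1) + (n - 1) := by
    rw [hVe, finrank_span_eq_card hei]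
    simp
  have hmapfinrank : ∀ L : Submodule ℝ g,
      Module.finrank ℝ (L.map j) = Module.finrank ℝ L :=
    fun L => ((Submodule.equivMapOfInjective j hjinj L).finrank_eq).symm
  have hdimle : ∀ L : Submodule ℝ g, L ≤ V → L ⊓ L.map j = ⊥ →
      Module.finrank ℝ L ≤ n - 1 := by
    intro L hLV hLtr
    have hjLV : L.map j ≤ V := Submodule.map_le_iff_le_comap.mpr fun x hx => hjV x (hLV hx)
    have hsup := Submodule.finrank_sup_add_finrank_inf_eq L (L.map j)
    rw [hLtr, hmapfinrank, finrank_bot, add_zero] at hsup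
    have hle : Module.finrank ℝ ↥(L ⊔ L.map j) ≤ Module.finrank ℝ V :=
      Submodule.finrank_mono (sup_le hLV hjLV)
    omega
  have step : ∀ L : Submodule ℝ g, L ≤ V → L ⊓ L.map j = ⊥ →
      Module.finrank ℝ L < n - 1 →
      ∃ L' : Submodule ℝ g, L ≤ L' ∧ L' ≤ V ∧ L' ⊓ L'.map j = ⊥ ∧
        Module.finrank ℝ L' = Module.finrank ℝ L + 1 ∧
        ∀ x ∈ L', ∀ y ∈ L', ∃ a ∈ L, ∃ b ∈ L, ⁅x, y⁆ = ⁅a, b⁆ := by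
    intro L hLV hLtr hLlt
    set U : Submodule ℝ g := L ⊔ L.map j with hU
    have hjLV : L.map j ≤ V := Submodule.map_le_iff_le_comap.mpr fun x hx => hjV x (hLV hx)
    have hUV : U ≤ V := sup_le hLV hjLV
    have hjU : ∀ x ∈ U, j x ∈ U := by
      intro x hx
      rw [hU, Submodule.mem_sup] at hx
      obtain ⟨y, hy, z, hz, rfl⟩ := hx
      obtain ⟨w, hw, rfl⟩ := hz
      rw [map_add]
      have h1 : j y ∈ U := Submodule.mem_sup_right (Submodule.mem_map_of_mem hy)
      have h2 : j (j w) ∈ U := by rw [hjj]; exact Submodule.mem_sup_left (L.neg_mem hw)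
      exact U.add_mem h1 h2
    have hUrank : Module.finrank ℝ U = Module.finrank ℝ L + Module.finrank ℝ L := by
      have h := Submodule.finrank_sup_add_finrank_inf_eq L (L.map j)
      rw [hLtr, hmapfinrank, finrank_bot, add_zero] at h
      exact h
    have hUlt : Module.finrank ℝ U < Module.finrank ℝ V := by
      rw [hVrank, hUrank]; omega
    let F : ↥V →ₗ[ℝ] Module.Dual ℝ ↥U := ((LinearMap.lcomp ℝ ℝ U.subtype).comp Bf).comp V.subtype
    have hker : LinearMap.ker F ≠ ⊥ := by
      intro hbot
      have h1 := LinearMap.finrank_range_add_finrank_ker F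
      rw [hbot, finrank_bot, add_zero] at h1
      have h2 : Module.finrank ℝ (LinearMap.range F) ≤ Module.finrank ℝ (Module.Dual ℝ ↥U) :=
        Submodule.finrank_le _
      rw [Subspace.dual_finrank_eq] at h2
      omega
    obtain ⟨v0, hv0ker, hv0ne⟩ := (Submodule.ne_bot_iff _).mp hker
    set v : g := (v0 : g) with hvdef
    have hvV : v ∈ V := v0.2
    have hvne : v ≠ 0 := by
      intro h
      exact hv0ne (Subtype.ext h)
    have hvperp : ∀ u ∈ U, Bf v u = 0 := by
      intro u hu
      have h0 : F v0 = 0 := LinearMap.mem_ker.mp hv0ker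
      exact congrArg (fun φ => φ (⟨u, hu⟩ : ↥U)) h0
    have hvU : v ∉ U := fun h => hvne (hpos v hvV (hvperp v h))
    have hjvU : j v ∉ U ⊔ Submodule.span ℝ {v} := by
      intro h
      rw [Submodule.mem_sup] at h
      obtain ⟨u, hu, z, hz, hsum⟩ := h
      obtain ⟨t, rfl⟩ := Submodule.mem_span_singleton.mp hz
      have hth : j u + t • (u + t • v) = -v := by
        have h2 := congrArg j hsum.symm
        rw [map_add, map_smul, hjj] at h2
        rw [← hsum] at h2
        exact h2.symm
      have h3 : (1 + t * t) • v = -(j u) - t • u := by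
        have h4 : (t * t) • v = -v - j u - t • u := by
          rw [smul_add, smul_smul] at hth
          rw [eq_sub_iff_add_eq, eq_sub_iff_add_eq]
          rw [← hth]; abel
        rw [add_smul, one_smul, h4]; abel
      have h1pos' : (0:ℝ) < 1 + t * t := by nlinarith [mul_self_nonneg t]
      have h1pos : (1 + t * t) ≠ 0 := h1pos'.ne'
      apply hvU
      have h5 : (1 + t * t) • v ∈ U :=
        h3 ▸ U.sub_mem (U.neg_mem (hjU u hu)) (U.smul_mem t hu)
      have h6 := U.smul_mem (1 + t * t)⁻¹ h5
      rwa [inv_smul_smul₀ h1pos] at h6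
    set L' : Submodule ℝ g := L ⊔ Submodule.span ℝ {v} with hL'
    have hL'V : L' ≤ V := sup_le hLV
      ((Submodule.span_le).mpr (by simpa using hvV))
    have hL'tr : L' ⊓ L'.map j = ⊥ := by
      rw [eq_bot_iff]
      rintro x hx
      obtain ⟨hx1, hx2⟩ := Submodule.mem_inf.mp hx
      obtain ⟨y, hy, hxy⟩ := hx2
      obtain ⟨l, hl, z, hz, hxd⟩ := Submodule.mem_sup.mp hx1
      obtain ⟨s, rfl⟩ := Submodule.mem_span_singleton.mp hz
      obtain ⟨l', hl', z', hz', hyd⟩ := Submodule.mem_sup.mp hy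
      obtain ⟨s', rfl⟩ := Submodule.mem_span_singleton.mp hz'
      rw [← hyd, map_add, map_smul] at hxy
      rw [← hxd] at hxy
      -- hxy : j l' + s' • j v = l + s • v
      have hs' : s' = 0 := by
        by_contra hs'
        apply hjvU
        have hjvval : j v = s'⁻¹ • (l + s • v - j l') := by
          rw [eq_inv_smul_iff₀ hs', ← hxy]; abel
        rw [hjvval]
        apply Submodule.smul_mem
        apply Submodule.sub_mem
        · apply Submodule.add_mem
          · exact Submodule.mem_sup_left (Submodule.mem_sup_left hl)
          · exact Submodule.mem_sup_right
              (Submodule.smul_mem _ s (Submodule.mem_span_singleton_self v))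
        · exact Submodule.mem_sup_left (Submodule.mem_sup_right (Submodule.mem_map_of_mem hl'))
      rw [hs', zero_smul, add_zero] at hxy
      -- hxy : j l' = l + s • v
      have hs : s = 0 := by
        by_contra hs
        apply hvU
        have hvval : v = s⁻¹ • (j l' - l) := by
          rw [eq_inv_smul_iff₀ hs, hxy]; abel
        rw [hvval]
        exact U.smul_mem _ (U.sub_mem
          (Submodule.mem_sup_right (Submodule.mem_map_of_mem hl')) (Submodule.mem_sup_left hl))
      rw [hs, zero_smul, add_zero] at hxd hxy
      have hmem : l ∈ L ⊓ L.map j := ⟨hl, ⟨l', hl', hxy⟩⟩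
      rw [hLtr] at hmem
      rw [← hxd]
      simpa using hmem
    have hLinf : L ⊓ Submodule.span ℝ {v} = ⊥ := by
      rw [eq_bot_iff]
      rintro x hx
      obtain ⟨hx1, hx2⟩ := Submodule.mem_inf.mp hx
      obtain ⟨t, rfl⟩ := Submodule.mem_span_singleton.mp hx2
      rcases eq_or_ne t 0 with ht | ht
      · simp [ht]
      · exfalso
        apply hvU
        refine Submodule.mem_sup_left ?_
        have := L.smul_mem t⁻¹ hx1
        rwa [inv_smul_smul₀ ht] at this
    have hL'rank : Module.finrank ℝ L' = Module.finrank ℝ L + 1 := by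
      have h := Submodule.finrank_sup_add_finrank_inf_eq L (Submodule.span ℝ {v})
      rw [hLinf, finrank_bot, add_zero, finrank_span_singleton hvne] at h
      exact h
    have hvLbr : ∀ l ∈ L, ⁅v, l⁆ = (0 : g) := by
      intro l hl
      have hl𝔫 : l ∈ 𝔫 := (LieSubalgebra.mem_toSubmodule 𝔫).mp (hV𝔫 (hLV hl))
      have hv𝔫 : v ∈ 𝔫 := (LieSubalgebra.mem_toSubmodule 𝔫).mp (hV𝔫 hvV)
      have h1 : ⁅v, l⁆ = cζ ⁅v, l⁆ • ζ := hbr' v hv𝔫 l hl𝔫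
      have h3 : Bf v (-(j l)) = 0 :=
        hvperp _ (U.neg_mem (Submodule.mem_sup_right (Submodule.mem_map_of_mem hl)))
      have h4 : cζ ⁅v, l⁆ = 0 := by
        rw [← h3, hBf, map_neg, hjj, neg_neg]
      rw [h1, h4, zero_smul]
    refine ⟨L', le_sup_left, hL'V, hL'tr, hL'rank, ?_⟩
    intro x hx y hy
    obtain ⟨l, hl, z, hz, hxd⟩ := Submodule.mem_sup.mp hx
    obtain ⟨s, rfl⟩ := Submodule.mem_span_singleton.mp hz
    obtain ⟨l', hl', z', hz', hyd⟩ := Submodule.mem_sup.mp hy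
    obtain ⟨s', rfl⟩ := Submodule.mem_span_singleton.mp hz'
    refine ⟨l, hl, l', hl', ?_⟩
    have hlv : ⁅l', v⁆ = (0 : g) := by
      rw [← lie_skew, hvLbr l' hl', neg_zero]
    have hlv2 : ⁅l, v⁆ = (0 : g) := by
      rw [← lie_skew, hvLbr l hl, neg_zero]
    rw [← hxd, ← hyd]
    simp [add_lie, lie_add, lie_smul, smul_lie, hlv, hlv2, hvLbr l hl, hvLbr l' hl', lie_self]
  have EXT : ∀ k : ℕ, ∀ L : Submodule ℝ g, L ≤ V → L ⊓ L.map j = ⊥ →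
      Module.finrank ℝ L + k = n - 1 →
      ∃ L' : Submodule ℝ g, L ≤ L' ∧ L' ≤ V ∧ L' ⊓ L'.map j = ⊥ ∧
        Module.finrank ℝ L' = n - 1 ∧
        ∀ x ∈ L', ∀ y ∈ L', ∃ a ∈ L, ∃ b ∈ L, ⁅x, y⁆ = ⁅a, b⁆ := by
    intro k
    induction k with
    | zero =>
      intro L h1 h2 h3
      exact ⟨L, le_rfl, h1, h2, by omega, fun x hx y hy => ⟨x, hx, y, hy, rfl⟩⟩
    | succ k ih =>
      intro L h1 h2 h3
      obtain ⟨L1, hLL1, hL1V, hL1tr, hL1rank, hL1br⟩ := step L h1 h2 (by omega)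
      obtain ⟨L2, hL1L2, hL2V, hL2tr, hL2rank, hL2br⟩ := ih L1 hL1V hL1tr (by omega)
      refine ⟨L2, hLL1.trans hL1L2, hL2V, hL2tr, hL2rank, ?_⟩
      intro x hx y hy
      obtain ⟨a, ha, b2, hb2m, hab⟩ := hL2br x hx y hy
      obtain ⟨a', ha', b', hb', hab'⟩ := hL1br a ha b2 hb2m
      exact ⟨a', ha', b', hb', hab.trans hab'⟩
  -- projection to V along ζ
  let πlin : g →ₗ[ℝ] g := LinearMap.id - (LinearMap.toSpanSingleton ℝ g ζ) ∘ₗ cζ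
  have hπapp : ∀ x : g, πlin x = x - cζ x • ζ := fun x => rfl
  have hrep : ∀ x : g, x = πlin x + cζ x • ζ := fun x => by rw [hπapp]; abel
  have hπ𝔫V : ∀ x ∈ 𝔫, πlin x ∈ V := by
    have hπmap : Submodule.map πlin 𝔫.toSubmodule ≤ V := by
      rw [h𝔫, Submodule.map_span]
      apply Submodule.span_le.mpr
      rintro x2 ⟨x, hx, rfl⟩
      rcases hx with (⟨k, rfl⟩ | ⟨k, rfl⟩) | rfl
      · rw [hπapp, hcζξ, zero_smul, sub_zero]; exact hξV k
      · rw [hπapp, hcζξ', zero_smul, sub_zero]; exact hξ'V k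
      · rw [hπapp, hcζζ, one_smul, sub_self]; exact V.zero_mem
    intro x hx
    exact hπmap (Submodule.mem_map_of_mem ((LieSubalgebra.mem_toSubmodule 𝔫).mpr hx))
  set W : Submodule ℝ g := 𝔫'.toSubmodule with hWdef
  set W₀ : Submodule ℝ g := W.map πlin with hW₀def
  have hW₀V : W₀ ≤ V := by
    rintro x2 ⟨x, hx, rfl⟩
    exact hπ𝔫V x (h'le ((LieSubalgebra.mem_toSubmodule 𝔫').mp hx))
  have hiso : (∀ x ∈ 𝔫', ∀ y ∈ 𝔫', ⁅x, y⁆ = (0:g)) →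
      ∀ a ∈ W₀, ∀ b ∈ W₀, ⁅a, b⁆ = (0:g) := by
    intro hab a ha b hb
    obtain ⟨x, hx, rfl⟩ := ha
    obtain ⟨y, hy, rfl⟩ := hb
    have hx' : x ∈ 𝔫' := (LieSubalgebra.mem_toSubmodule 𝔫').mp hx
    have hy' : y ∈ 𝔫' := (LieSubalgebra.mem_toSubmodule 𝔫').mp hy
    have hx𝔫 : x ∈ 𝔫 := h'le hx'
    have hy𝔫 : y ∈ 𝔫 := h'le hy'
    rw [hπapp, hπapp]
    simp [sub_lie, lie_sub, lie_smul, smul_lie, hζc' x hx𝔫, hζc y hy𝔫,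
      hab x hx' y hy', lie_self]
  have hW₀tr : W₀ ⊓ W₀.map j = ⊥ := by
    by_cases hζmem : ζ ∈ W
    · have hW₀W : W₀ ≤ W := by
        rintro x2 ⟨x, hx, rfl⟩
        rw [hπapp]
        exact W.sub_mem hx (W.smul_mem _ hζmem)
      rw [eq_bot_iff]
      intro x hx
      obtain ⟨h1, h2⟩ := Submodule.mem_inf.mp hx
      have h2' : x ∈ W.map j := by
        obtain ⟨y, hy, rfl⟩ := h2
        exact Submodule.mem_map_of_mem (hW₀W hy)
      have hxx : x ∈ W ⊓ W.map j := ⟨hW₀W h1, h2'⟩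
      rw [hWdef, h'tr] at hxx
      simpa using hxx
    · have hab : ∀ x ∈ 𝔫', ∀ y ∈ 𝔫', ⁅x, y⁆ = (0:g) := by
        intro x hx y hy
        have hbrm : ⁅x, y⁆ ∈ Submodule.span ℝ ({ζ} : Set g) :=
          hbr x (h'le hx) y (h'le hy)
        have hW' : ⁅x, y⁆ ∈ W :=
          (LieSubalgebra.mem_toSubmodule 𝔫').mpr (𝔫'.lie_mem hx hy)
        obtain ⟨t, hteq⟩ := Submodule.mem_span_singleton.mp hbrm
        rcases eq_or_ne t 0 with ht | ht
        · rw [← hteq, ht, zero_smul]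
        · exfalso
          apply hζmem
          have htW : t • ζ ∈ W := by rw [hteq]; exact hW'
          have := W.smul_mem t⁻¹ htW
          rwa [inv_smul_smul₀ ht] at this
      have hW₀iso := hiso hab
      rw [eq_bot_iff]
      intro x hx
      obtain ⟨h1, h2⟩ := Submodule.mem_inf.mp hx
      obtain ⟨y, hy, rfl⟩ := h2
      have hyz : Bf y y = 0 := by
        rw [hBf, hW₀iso y hy (j y) h1, map_zero]
      have hy0 : y = 0 := hpos y (hW₀V hy) hyz
      rw [hy0, map_zero]
      exact Submodule.zero_mem ⊥
  -- extend W₀ to a maximal totally real L inside V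
  obtain ⟨L, hW₀L, hLV, hLtr, hLrank, hLbr⟩ :=
    EXT ((n - 1) - Module.finrank ℝ W₀) W₀ hW₀V hW₀tr
      (by have := hdimle W₀ hW₀V hW₀tr; omega)
  -- the maximal totally real subalgebra M = L ⊕ ℝζ
  set M : Submodule ℝ g := L ⊔ Submodule.span ℝ {ζ} with hMdef
  have hζ𝔫' : ζ ∈ 𝔫.toSubmodule := (LieSubalgebra.mem_toSubmodule 𝔫).mpr hζ𝔫
  have hM𝔫 : M ≤ 𝔫.toSubmodule :=
    sup_le (le_trans hLV hV𝔫) (Submodule.span_le.mpr (by simpa using hζ𝔫'))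
  have hζne : ζ ≠ 0 := by simpa [hf] using hindep.ne_zero (Sum.inl 1)
  have hLζinf : L ⊓ Submodule.span ℝ {ζ} = ⊥ := by
    rw [eq_bot_iff]
    intro x hx
    obtain ⟨h1, h2⟩ := Submodule.mem_inf.mp hx
    obtain ⟨t, rfl⟩ := Submodule.mem_span_singleton.mp h2
    have h3 : cζ (t • ζ) = 0 := (hVc _ (hLV h1)).1
    rw [map_smul, hcζζ, smul_eq_mul, mul_one] at h3
    simp [h3]
  have hMrank : Module.finrank ℝ M = n := by
    have h := Submodule.finrank_sup_add_finrank_inf_eq L (Submodule.span ℝ {ζ})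
    rw [hLζinf, finrank_bot, add_zero, finrank_span_singleton hζne, hLrank] at h
    rw [← hMdef] at h
    omega
  have hMlie : ∀ x ∈ M, ∀ y ∈ M, ⁅x, y⁆ ∈ M := by
    intro x hx y hy
    have hx𝔫 : x ∈ 𝔫 := (LieSubalgebra.mem_toSubmodule 𝔫).mp (hM𝔫 hx)
    have hy𝔫 : y ∈ 𝔫 := (LieSubalgebra.mem_toSubmodule 𝔫).mp (hM𝔫 hy)
    exact Submodule.mem_sup_right (hbr x hx𝔫 y hy𝔫)
  set m : LieSubalgebra ℝ g :=
    { M with lie_mem' := fun {x y} hx hy => hMlie x hx y hy } with hmdef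
  have hmM : ∀ x : g, x ∈ m ↔ x ∈ M := fun x => Iff.rfl
  have hm1 : 𝔫' ≤ m := by
    intro x hx
    rw [hmM]
    have hxW : x ∈ W := (LieSubalgebra.mem_toSubmodule 𝔫').mpr hx
    have h1 : πlin x ∈ M :=
      Submodule.mem_sup_left (hW₀L (Submodule.mem_map_of_mem hxW))
    have h2 : cζ x • ζ ∈ M :=
      Submodule.mem_sup_right (Submodule.smul_mem _ _ (Submodule.mem_span_singleton_self ζ))
    have := M.add_mem h1 h2
    rwa [← hrep x] at this
  have hm2 : m ≤ 𝔫 := by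
    intro x hx
    exact (LieSubalgebra.mem_toSubmodule 𝔫).mp (hM𝔫 ((hmM x).mp hx))
  have hmtr : M ⊓ M.map j = ⊥ := by
    rw [eq_bot_iff]
    intro x hx
    obtain ⟨h1, h2⟩ := Submodule.mem_inf.mp hx
    obtain ⟨y, hy, rfl⟩ := h2
    obtain ⟨l', hl', z', hz', hyd⟩ := Submodule.mem_sup.mp hy
    obtain ⟨t', rfl⟩ := Submodule.mem_span_singleton.mp hz'
    have hjy : j y = j l' + t' • α := by rw [← hyd, map_add, map_smul, hj1]
    have hcαx : cα (j y) = 0 :=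
      h𝔫α0 _ ((LieSubalgebra.mem_toSubmodule 𝔫).mp (hM𝔫 h1))
    rw [hjy, map_add, map_smul] at hcαx
    have h5 : cα (j l') = 0 := (hVc _ (hjV l' (hLV hl'))).2
    rw [h5, hcαα, smul_eq_mul, mul_one, zero_add] at hcαx
    rw [hcαx, zero_smul, add_zero] at hjy
    -- j y = j l'
    obtain ⟨l, hl, z, hz, hxd⟩ := Submodule.mem_sup.mp h1
    obtain ⟨t, rfl⟩ := Submodule.mem_span_singleton.mp hz
    have hjyV : j y ∈ V := by rw [hjy]; exact hjV l' (hLV hl')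
    have hcz : cζ (j y) = 0 := (hVc _ hjyV).1
    rw [← hxd, map_add, map_smul, hcζζ] at hcz
    have hczl : cζ l = 0 := (hVc _ (hLV hl)).1
    rw [hczl, zero_add, smul_eq_mul, mul_one] at hcz
    rw [hcz, zero_smul, add_zero] at hxd
    have hmem : j y ∈ L ⊓ L.map j := by
      constructor
      · rw [← hxd]; exact hl
      · exact ⟨l', hl', hjy.symm⟩
    rw [hLtr] at hmem
    simpa using hmem
  have hm3 : m.toSubmodule ⊓ (m.toSubmodule.map j) = ⊥ := hmtr
  have hm4 : Module.finrank ℝ m = n := hMrank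
  have habelian : (∀ x ∈ 𝔫', ∀ y ∈ 𝔫', ⁅x, y⁆ = (0:g)) →
      ∀ x ∈ m, ∀ y ∈ m, ⁅x, y⁆ = (0 : g) := by
    intro hab x hx y hy
    rw [hmM] at hx hy
    obtain ⟨l, hl, z, hz, hxd⟩ := Submodule.mem_sup.mp hx
    obtain ⟨t, rfl⟩ := Submodule.mem_span_singleton.mp hz
    obtain ⟨l', hl', z', hz', hyd⟩ := Submodule.mem_sup.mp hy
    obtain ⟨t', rfl⟩ := Submodule.mem_span_singleton.mp hz'
    have hll' : ⁅l, l'⁆ = (0 : g) := by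
      obtain ⟨a, ha, b2, hb2m, hab2⟩ := hLbr l hl l' hl'
      rw [hab2]
      exact hiso hab a ha b2 hb2m
    have hl𝔫 : l ∈ 𝔫 := (LieSubalgebra.mem_toSubmodule 𝔫).mp (hV𝔫 (hLV hl))
    have hl'𝔫 : l' ∈ 𝔫 := (LieSubalgebra.mem_toSubmodule 𝔫).mp (hV𝔫 (hLV hl'))
    rw [← hxd, ← hyd]
    simp [add_lie, lie_add, lie_smul, smul_lie, hll', hζc' l hl𝔫, hζc l' hl'𝔫, lie_self]
  exact ⟨⟨m, hm1, hm2, hm3, hm4⟩, fun hab => ⟨m, hm1, hm2, hm3, hm4, habelian hab⟩⟩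
end

section
/- Let n ≥ 3 and let g, j, the subalgebra 𝔫, and the ideal 𝔫_{n−1} be the normal j-algebra data of the n-dimensional Lie ball described in the context. If 𝔫' is a Lie subalgebra of 𝔫 with 𝔫' ∩ j(𝔫') = {0} which is not contained in 𝔫_{n−1}, then there exists a Lie subalgebra 𝔫̂' of 𝔫 containing 𝔫' with 𝔫̂' ∩ j(𝔫̂') = {0} and dim_ℝ 𝔫̂' = n. -/
open Submodule Module

/-- Extension of an `S`-invariant totally real subspace to a maximal one. -/
lemma ext_tr_aux (V : Type*) [AddCommGroup V] [Module ℝ V] [FiniteDimensional ℝ V]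
    (j S : V →ₗ[ℝ] V) (W E : Submodule ℝ V) (m : ℕ)
    (hjj : ∀ x, j (j x) = -x)
    (hjW : ∀ x ∈ W, j x ∈ W)
    (hEW : E ≤ W)
    (hW2 : W ≤ E ⊔ Submodule.map j E)
    (hSE : ∀ x ∈ E, S x = 0)
    (hdimW : finrank ℝ W = 2 * m)
    (U : Submodule ℝ V) (hUW : U ≤ W) (hUtr : U ⊓ Submodule.map j U = ⊥)
    (hUS : ∀ x ∈ U, S x ∈ U) :
    ∃ L : Submodule ℝ V, U ≤ L ∧ L ≤ W ∧ L ⊓ Submodule.map j L = ⊥ ∧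
      (∀ x ∈ L, S x ∈ L) ∧ finrank ℝ L = m := by
  have hjinj : Function.Injective j := by
    intro x y hxy
    have : j (j x) = j (j y) := by rw [hxy]
    rw [hjj, hjj, neg_inj] at this; exact this
  have hmapfr : ∀ L : Submodule ℝ V, finrank ℝ (Submodule.map j L) = finrank ℝ L := by
    intro L
    exact (Submodule.equivMapOfInjective j hjinj L).symm.finrank_eq
  have hle_m : ∀ L : Submodule ℝ V, L ≤ W → L ⊓ Submodule.map j L = ⊥ → finrank ℝ L ≤ m := by
    intro L hLW hLtr
    have h1 : Submodule.map j L ≤ W := by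
      rintro x ⟨y, hy, rfl⟩; exact hjW y (hLW hy)
    have h2 := Submodule.finrank_sup_add_finrank_inf_eq L (Submodule.map j L)
    rw [hLtr, finrank_bot, hmapfr] at h2
    have h3 : finrank ℝ ↥(L ⊔ Submodule.map j L) ≤ finrank ℝ W :=
      Submodule.finrank_mono (sup_le hLW h1)
    omega
  suffices h : ∀ k : ℕ, ∀ L : Submodule ℝ V, U ≤ L → L ≤ W → L ⊓ Submodule.map j L = ⊥ →
      (∀ x ∈ L, S x ∈ L) → m - finrank ℝ L ≤ k →
      ∃ L' : Submodule ℝ V, U ≤ L' ∧ L' ≤ W ∧ L' ⊓ Submodule.map j L' = ⊥ ∧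
        (∀ x ∈ L', S x ∈ L') ∧ finrank ℝ L' = m by
    exact h m U le_rfl hUW hUtr hUS (Nat.sub_le _ _)
  intro k
  induction k with
  | zero =>
    intro L hUL hLW hLtr hLS hk
    exact ⟨L, hUL, hLW, hLtr, hLS, le_antisymm (hle_m L hLW hLtr) (by omega)⟩
  | succ k ih =>
    intro L hUL hLW hLtr hLS hk
    rcases eq_or_lt_of_le (hle_m L hLW hLtr) with heq | hlt
    · exact ⟨L, hUL, hLW, hLtr, hLS, heq⟩
    set M : Submodule ℝ V := L ⊔ Submodule.map j L with hM
    have hMW : M ≤ W := sup_le hLW (by rintro x ⟨y, hy, rfl⟩; exact hjW y (hLW hy))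
    have hjM : ∀ x ∈ M, j x ∈ M := by
      intro x hx
      rcases Submodule.mem_sup.1 hx with ⟨p, hp, q, hq, rfl⟩
      rcases hq with ⟨q', hq', rfl⟩
      have : j (p + j q') = j p + j (j q') := map_add _ _ _
      rw [this, hjj]
      exact add_mem (Submodule.mem_sup_right ⟨p, hp, rfl⟩)
        (neg_mem (Submodule.mem_sup_left hq'))
    have hcex : ∃ c ∈ E, c ∉ M := by
      by_contra hc
      push_neg at hc
      have hEM : E ≤ M := hc
      have hWM : W ≤ M := by
        refine le_trans hW2 (sup_le hEM ?_)
        rintro x ⟨y, hy, rfl⟩; exact hjM y (hEM hy)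
      have h1 : finrank ℝ W ≤ finrank ℝ M := Submodule.finrank_mono hWM
      have h2 := Submodule.finrank_sup_add_finrank_inf_eq L (Submodule.map j L)
      rw [hLtr, finrank_bot, hmapfr] at h2
      rw [← hM] at h2
      omega
    obtain ⟨c, hcE, hcM⟩ := hcex
    have hcL : c ∉ L := fun h => hcM (Submodule.mem_sup_left h)
    have hc0 : c ≠ 0 := fun h => hcM (h ▸ M.zero_mem)
    set L' : Submodule ℝ V := L ⊔ ℝ ∙ c with hL'
    have hLL' : L ≤ L' := le_sup_left
    have hdec : ∀ x ∈ L', ∃ u ∈ L, ∃ s : ℝ, x = u + s • c := by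
      intro x hx
      rcases Submodule.mem_sup.1 hx with ⟨u, hu, q, hq, rfl⟩
      rcases Submodule.mem_span_singleton.1 hq with ⟨s, rfl⟩
      exact ⟨u, hu, s, rfl⟩
    have hL'tr : L' ⊓ Submodule.map j L' = ⊥ := by
      rw [eq_bot_iff]
      rintro x ⟨hx1, hx2⟩
      rcases hdec x hx1 with ⟨u, hu, s, rfl⟩
      rcases hx2 with ⟨y, hy, hxy⟩
      rcases hdec y hy with ⟨u', hu', t, rfl⟩
      have key : u - j u' = t • j c - s • c := by
        have : u + s • c = j u' + t • j c := by
          rw [← hxy]; rw [map_add, map_smul]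
        linear_combination (norm := module) this
      have hqM : t • j c - s • c ∈ M := by
        rw [← key]
        exact sub_mem (Submodule.mem_sup_left hu) (Submodule.mem_sup_right ⟨u', hu', rfl⟩)
      have hjqM : j (t • j c - s • c) ∈ M := hjM _ hqM
      have hjq : j (t • j c - s • c) = -(t • c) - s • j c := by
        rw [map_sub, map_smul, map_smul, hjj]; module
      have hcomb : (s^2 + t^2) • c ∈ M := by
        have h1 : (-s) • (t • j c - s • c) - t • (-(t • c) - s • j c) = (s^2 + t^2) • c := by
          module
        rw [← h1]
        exact sub_mem (Submodule.smul_mem _ _ hqM) (Submodule.smul_mem _ _ (hjq ▸ hjqM))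
      have hst : s^2 + t^2 = 0 := by
        by_contra hne
        exact hcM (by
          have := Submodule.smul_mem M (s^2+t^2)⁻¹ hcomb
          rwa [smul_smul, inv_mul_cancel₀ hne, one_smul] at this)
      have hs : s = 0 := by nlinarith [sq_nonneg s, sq_nonneg t]
      have ht : t = 0 := by nlinarith [sq_nonneg s, sq_nonneg t]
      subst hs; subst ht
      simp only [zero_smul, add_zero] at hxy ⊢
      have hu'j : u ∈ L ⊓ Submodule.map j L := ⟨hu, ⟨u', hu', hxy⟩⟩
      rw [hLtr] at hu'j
      simpa using hu'j
    have hL'S : ∀ x ∈ L', S x ∈ L' := by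
      intro x hx
      rcases hdec x hx with ⟨u, hu, s, rfl⟩
      rw [map_add, map_smul, hSE c hcE, smul_zero, add_zero]
      exact hLL' (hLS u hu)
    have hL'W : L' ≤ W := sup_le hLW ((Submodule.span_singleton_le_iff_mem c W).2 (hEW hcE))
    have hfr : finrank ℝ L' = finrank ℝ L + 1 := by
      have hinf : L ⊓ (ℝ ∙ c) = ⊥ := by
        rw [eq_bot_iff]
        rintro x ⟨hx1, hx2⟩
        rcases Submodule.mem_span_singleton.1 hx2 with ⟨r, rfl⟩
        rcases eq_or_ne r 0 with rfl | hr
        · simp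
        · exact absurd (by
            have := Submodule.smul_mem L r⁻¹ hx1
            rwa [smul_smul, inv_mul_cancel₀ hr, one_smul] at this) hcL
      have h2 := Submodule.finrank_sup_add_finrank_inf_eq L (ℝ ∙ c)
      rw [hinf, finrank_bot, finrank_span_singleton hc0, ← hL'] at h2
      omega
    exact ih L' (le_trans hUL hLL') hL'W hL'tr hL'S (by omega)

set_option maxHeartbeats 1000000 in
/-- Let `g` (with linear map `j`, nilradical `𝔫`, and ideal `𝔫_{n-1}`) be
the normal `j`-algebra of the `n`-dimensional Lie ball (`n ≥ 3`), with basis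
`δ, α, η, ζ, ξ_1, …, ξ_{n-2}, ξ'_1, …, ξ'_{n-2}` and brackets/complex structure as in the
paper; `𝔫` is spanned by the `ξ_k, ξ'_k, ζ, η` and `𝔫_{n-1}` by the `ξ_k, ξ'_k, ζ`.
If `𝔫'` is a totally real Lie subalgebra of `𝔫` not contained in `𝔫_{n-1}`, then there is
a maximal totally real Lie subalgebra `𝔫̂'` of `𝔫` (totally real, of real dimension `n`)
containing `𝔫'`. -/
theorem statement3 (n : ℕ) (hn : 3 ≤ n) (g : Type*) [LieRing g] [LieAlgebra ℝ g]
    (δ α η ζ : g) (ξ ξ' : Fin (n - 2) → g)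
    (hindep : LinearIndependent ℝ (Sum.elim ![δ, α, η, ζ] (Sum.elim ξ ξ')))
    (hspan : Submodule.span ℝ (Set.range (Sum.elim ![δ, α, η, ζ] (Sum.elim ξ ξ'))) = ⊤)
    (hb1 : ∀ k, ⁅ξ k, ξ' k⁆ = ζ)
    (hb2 : ∀ k, ⁅η, ξ' k⁆ = (2 : ℝ) • ξ k)
    (hb3 : ∀ k, ⁅δ, ξ k⁆ = -ξ k)
    (hb4 : ⁅δ, ζ⁆ = -ζ)
    (hb5 : ⁅δ, η⁆ = -η)
    (hb6 : ∀ k, ⁅α, ξ' k⁆ = -ξ' k)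
    (hb7 : ⁅α, ζ⁆ = -ζ)
    (hb8 : ⁅α, η⁆ = η)
    (hz1 : ⁅δ, α⁆ = (0 : g))
    (hz2 : ∀ k, ⁅δ, ξ' k⁆ = (0 : g))
    (hz3 : ∀ k, ⁅α, ξ k⁆ = (0 : g))
    (hz4 : ∀ k, ⁅η, ξ k⁆ = (0 : g))
    (hz5 : ⁅η, ζ⁆ = (0 : g))
    (hz6 : ∀ k, ⁅ζ, ξ k⁆ = (0 : g))
    (hz7 : ∀ k, ⁅ζ, ξ' k⁆ = (0 : g))
    (hz8 : ∀ k l, ⁅ξ k, ξ l⁆ = (0 : g))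
    (hz9 : ∀ k l, ⁅ξ' k, ξ' l⁆ = (0 : g))
    (hz10 : ∀ k l, k ≠ l → ⁅ξ k, ξ' l⁆ = (0 : g))
    (j : g →ₗ[ℝ] g)
    (hj1 : ∀ k, j (ξ k) = ξ' k) (hj2 : ∀ k, j (ξ' k) = -ξ k)
    (hj3 : j ζ = α + δ) (hj4 : j η = δ - α)
    (hj5 : j δ = -((1 / 2 : ℝ) • (ζ + η))) (hj6 : j α = (1 / 2 : ℝ) • (η - ζ))
    (𝔫 : LieSubalgebra ℝ g)
    (h𝔫 : 𝔫.toSubmodule =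
      Submodule.span ℝ (Set.range ξ ∪ Set.range ξ' ∪ {ζ, η}))
    (𝔫' : LieSubalgebra ℝ g) (h'le : 𝔫' ≤ 𝔫)
    (h'tr : 𝔫'.toSubmodule ⊓ (𝔫'.toSubmodule.map j) = ⊥)
    (h'not : ¬ (𝔫'.toSubmodule ≤
      Submodule.span ℝ (Set.range ξ ∪ Set.range ξ' ∪ {ζ}))) :
    ∃ m : LieSubalgebra ℝ g, 𝔫' ≤ m ∧ m ≤ 𝔫 ∧
      m.toSubmodule ⊓ (m.toSubmodule.map j) = ⊥ ∧ Module.finrank ℝ m = n := by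
  classical
  -- basis and coordinates
  set b : Fin 4 ⊕ (Fin (n-2) ⊕ Fin (n-2)) → g := Sum.elim ![δ, α, η, ζ] (Sum.elim ξ ξ') with hbdef
  have hspan' : ⊤ ≤ Submodule.span ℝ (Set.range b) := by rw [hspan]
  let B : Basis (Fin 4 ⊕ (Fin (n-2) ⊕ Fin (n-2))) ℝ g := Basis.mk hindep hspan'
  haveI : FiniteDimensional ℝ g := Module.Finite.of_basis B
  have hBapp : ∀ i, B i = b i := fun i => Basis.mk_apply hindep hspan' i
  have hco : ∀ i i', B.coord i' (b i) = if i = i' then 1 else 0 := by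
    intro i i'
    rw [← hBapp, Basis.coord_apply, Basis.repr_self, Finsupp.single_apply]
  have cdδ : B.coord (Sum.inl 0) δ = 1 := by simpa [hbdef] using hco (Sum.inl 0) (Sum.inl 0)
  have cdα : B.coord (Sum.inl 0) α = 0 := by simpa [hbdef] using hco (Sum.inl 1) (Sum.inl 0)
  have cdη : B.coord (Sum.inl 0) η = 0 := by simpa [hbdef] using hco (Sum.inl 2) (Sum.inl 0)
  have cdζ : B.coord (Sum.inl 0) ζ = 0 := by simpa [hbdef] using hco (Sum.inl 3) (Sum.inl 0)
  have cdξ : ∀ k, B.coord (Sum.inl 0) (ξ k) = 0 := fun k => by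
    simpa [hbdef] using hco (Sum.inr (Sum.inl k)) (Sum.inl 0)
  have cdξ' : ∀ k, B.coord (Sum.inl 0) (ξ' k) = 0 := fun k => by
    simpa [hbdef] using hco (Sum.inr (Sum.inr k)) (Sum.inl 0)
  have caδ : B.coord (Sum.inl 1) δ = 0 := by simpa [hbdef] using hco (Sum.inl 0) (Sum.inl 1)
  have caα : B.coord (Sum.inl 1) α = 1 := by simpa [hbdef] using hco (Sum.inl 1) (Sum.inl 1)
  have caη : B.coord (Sum.inl 1) η = 0 := by simpa [hbdef] using hco (Sum.inl 2) (Sum.inl 1)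
  have caζ : B.coord (Sum.inl 1) ζ = 0 := by simpa [hbdef] using hco (Sum.inl 3) (Sum.inl 1)
  have caξ : ∀ k, B.coord (Sum.inl 1) (ξ k) = 0 := fun k => by
    simpa [hbdef] using hco (Sum.inr (Sum.inl k)) (Sum.inl 1)
  have caξ' : ∀ k, B.coord (Sum.inl 1) (ξ' k) = 0 := fun k => by
    simpa [hbdef] using hco (Sum.inr (Sum.inr k)) (Sum.inl 1)
  have ceδ : B.coord (Sum.inl 2) δ = 0 := by simpa [hbdef] using hco (Sum.inl 0) (Sum.inl 2)
  have ceα : B.coord (Sum.inl 2) α = 0 := by simpa [hbdef] using hco (Sum.inl 1) (Sum.inl 2)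
  have ceη : B.coord (Sum.inl 2) η = 1 := by simpa [hbdef] using hco (Sum.inl 2) (Sum.inl 2)
  have ceζ : B.coord (Sum.inl 2) ζ = 0 := by simpa [hbdef] using hco (Sum.inl 3) (Sum.inl 2)
  have ceξ : ∀ k, B.coord (Sum.inl 2) (ξ k) = 0 := fun k => by
    simpa [hbdef] using hco (Sum.inr (Sum.inl k)) (Sum.inl 2)
  have ceξ' : ∀ k, B.coord (Sum.inl 2) (ξ' k) = 0 := fun k => by
    simpa [hbdef] using hco (Sum.inr (Sum.inr k)) (Sum.inl 2)
  have czδ : B.coord (Sum.inl 3) δ = 0 := by simpa [hbdef] using hco (Sum.inl 0) (Sum.inl 3)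
  have czα : B.coord (Sum.inl 3) α = 0 := by simpa [hbdef] using hco (Sum.inl 1) (Sum.inl 3)
  have czη : B.coord (Sum.inl 3) η = 0 := by simpa [hbdef] using hco (Sum.inl 2) (Sum.inl 3)
  have czζ : B.coord (Sum.inl 3) ζ = 1 := by simpa [hbdef] using hco (Sum.inl 3) (Sum.inl 3)
  have czξ : ∀ k, B.coord (Sum.inl 3) (ξ k) = 0 := fun k => by
    simpa [hbdef] using hco (Sum.inr (Sum.inl k)) (Sum.inl 3)
  have czξ' : ∀ k, B.coord (Sum.inl 3) (ξ' k) = 0 := fun k => by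
    simpa [hbdef] using hco (Sum.inr (Sum.inr k)) (Sum.inl 3)
  -- submodules
  set E : Submodule ℝ g := Submodule.span ℝ (Set.range ξ) with hEdef
  set W : Submodule ℝ g := Submodule.span ℝ (Set.range ξ ∪ Set.range ξ') with hWdef
  set N1 : Submodule ℝ g := Submodule.span ℝ (Set.range ξ ∪ Set.range ξ' ∪ {ζ}) with hN1def
  set NN : Submodule ℝ g := Submodule.span ℝ (Set.range ξ ∪ Set.range ξ' ∪ {ζ, η}) with hNNdef
  have hξE : ∀ k, ξ k ∈ E := fun k => subset_span ⟨k, rfl⟩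
  have hξW : ∀ k, ξ k ∈ W := fun k => subset_span (Or.inl ⟨k, rfl⟩)
  have hξ'W : ∀ k, ξ' k ∈ W := fun k => subset_span (Or.inr ⟨k, rfl⟩)
  have hζN1 : ζ ∈ N1 := subset_span (Or.inr rfl)
  have hζNN : ζ ∈ NN := subset_span (Or.inr (Or.inl rfl))
  have hηNN : η ∈ NN := subset_span (Or.inr (Or.inr rfl))
  have hEW : E ≤ W := span_mono Set.subset_union_left
  have hWN1 : W ≤ N1 := span_mono Set.subset_union_left
  have hN1NN : N1 ≤ NN := span_mono (Set.union_subset_union_right _ (by simp))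
  -- kernel facts
  have hNd : ∀ x ∈ NN, B.coord (Sum.inl 0) x = 0 := by
    intro x hx
    suffices h : x ∈ LinearMap.ker (B.coord (Sum.inl 0)) from LinearMap.mem_ker.1 h
    refine span_le.2 ?_ hx
    rintro y ((⟨k, rfl⟩ | ⟨k, rfl⟩) | (rfl | rfl))
    · exact LinearMap.mem_ker.2 (cdξ k)
    · exact LinearMap.mem_ker.2 (cdξ' k)
    · exact LinearMap.mem_ker.2 cdζ
    · exact LinearMap.mem_ker.2 cdη
  have hNa : ∀ x ∈ NN, B.coord (Sum.inl 1) x = 0 := by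
    intro x hx
    suffices h : x ∈ LinearMap.ker (B.coord (Sum.inl 1)) from LinearMap.mem_ker.1 h
    refine span_le.2 ?_ hx
    rintro y ((⟨k, rfl⟩ | ⟨k, rfl⟩) | (rfl | rfl))
    · exact LinearMap.mem_ker.2 (caξ k)
    · exact LinearMap.mem_ker.2 (caξ' k)
    · exact LinearMap.mem_ker.2 caζ
    · exact LinearMap.mem_ker.2 caη
  have hN1e : ∀ x ∈ N1, B.coord (Sum.inl 2) x = 0 := by
    intro x hx
    suffices h : x ∈ LinearMap.ker (B.coord (Sum.inl 2)) from LinearMap.mem_ker.1 h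
    refine span_le.2 ?_ hx
    rintro y ((⟨k, rfl⟩ | ⟨k, rfl⟩) | rfl)
    · exact LinearMap.mem_ker.2 (ceξ k)
    · exact LinearMap.mem_ker.2 (ceξ' k)
    · exact LinearMap.mem_ker.2 ceζ
  have hWz : ∀ x ∈ W, B.coord (Sum.inl 3) x = 0 := by
    intro x hx
    suffices h : x ∈ LinearMap.ker (B.coord (Sum.inl 3)) from LinearMap.mem_ker.1 h
    refine span_le.2 ?_ hx
    rintro y (⟨k, rfl⟩ | ⟨k, rfl⟩)
    · exact LinearMap.mem_ker.2 (czξ k)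
    · exact LinearMap.mem_ker.2 (czξ' k)
  have hWe : ∀ x ∈ W, B.coord (Sum.inl 2) x = 0 := by
    intro x hx
    suffices h : x ∈ LinearMap.ker (B.coord (Sum.inl 2)) from LinearMap.mem_ker.1 h
    refine span_le.2 ?_ hx
    rintro y (⟨k, rfl⟩ | ⟨k, rfl⟩)
    · exact LinearMap.mem_ker.2 (ceξ k)
    · exact LinearMap.mem_ker.2 (ceξ' k)
  -- projections
  set π1 : g →ₗ[ℝ] g := LinearMap.id - (B.coord (Sum.inl 2)).smulRight η with hπ1def
  set π : g →ₗ[ℝ] g := LinearMap.id - (B.coord (Sum.inl 3)).smulRight ζ with hπdef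
  have hπ1app : ∀ x, π1 x = x - (B.coord (Sum.inl 2) x) • η := fun x => rfl
  have hπapp : ∀ x, π x = x - (B.coord (Sum.inl 3) x) • ζ := fun x => rfl
  have hπ1N1 : ∀ x ∈ NN, π1 x ∈ N1 := by
    intro x hx
    refine (Submodule.map_span_le _ _ _).2 ?_ ⟨x, hx, rfl⟩
    rintro y ((⟨k, rfl⟩ | ⟨k, rfl⟩) | (rfl | rfl))
    · rw [hπ1app, ceξ, zero_smul, sub_zero]; exact hWN1 (hξW k)
    · rw [hπ1app, ceξ', zero_smul, sub_zero]; exact hWN1 (hξ'W k)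
    · rw [hπ1app, ceζ, zero_smul, sub_zero]; exact hζN1
    · rw [hπ1app, ceη, one_smul, sub_self]; exact zero_mem _
  have hπW : ∀ x ∈ N1, π x ∈ W := by
    intro x hx
    refine (Submodule.map_span_le _ _ _).2 ?_ ⟨x, hx, rfl⟩
    rintro y ((⟨k, rfl⟩ | ⟨k, rfl⟩) | rfl)
    · rw [hπapp, czξ, zero_smul, sub_zero]; exact hξW k
    · rw [hπapp, czξ', zero_smul, sub_zero]; exact hξ'W k
    · rw [hπapp, czζ, one_smul, sub_self]; exact zero_mem _
  have hN1of : ∀ x ∈ NN, B.coord (Sum.inl 2) x = 0 → x ∈ N1 := by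
    intro x hx h0
    have := hπ1N1 x hx
    rwa [hπ1app, h0, zero_smul, sub_zero] at this
  have hWof : ∀ x ∈ N1, B.coord (Sum.inl 3) x = 0 → x ∈ W := by
    intro x hx h0
    have := hπW x hx
    rwa [hπapp, h0, zero_smul, sub_zero] at this
  -- j facts
  have hjW : ∀ x ∈ W, j x ∈ W := by
    intro x hx
    refine (Submodule.map_span_le _ _ _).2 ?_ ⟨x, hx, rfl⟩
    rintro y (⟨k, rfl⟩ | ⟨k, rfl⟩)
    · rw [hj1]; exact hξ'W k
    · rw [hj2]; exact neg_mem (hξW k)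
  have hjj : ∀ x, j (j x) = -x := by
    have hker : ∀ x, x ∈ LinearMap.ker (j ∘ₗ j + LinearMap.id) := by
      intro x
      refine span_le.2 ?_ (hspan' trivial)
      rintro y ⟨i, rfl⟩
      have hmem : ∀ q : g, j (j q) + q = 0 → q ∈ (LinearMap.ker (j ∘ₗ j + LinearMap.id) : Submodule ℝ g) := by
        intro q hq
        rw [LinearMap.mem_ker, LinearMap.add_apply, LinearMap.comp_apply,
          LinearMap.id_apply]
        exact hq
      rcases i with i | i
      · fin_cases i
        · show (δ : g) ∈ _
          refine hmem δ ?_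
          rw [hj5, map_neg, map_smul, map_add, hj3, hj4]; module
        · show (α : g) ∈ _
          refine hmem α ?_
          rw [hj6, map_smul, map_sub, hj4, hj3]; module
        · show (η : g) ∈ _
          refine hmem η ?_
          rw [hj4, map_sub, hj5, hj6]; module
        · show (ζ : g) ∈ _
          refine hmem ζ ?_
          rw [hj3, map_add, hj6, hj5]; module
      · rcases i with k | k
        · refine hmem (ξ k) ?_
          rw [hj1, hj2]; module
        · refine hmem (ξ' k) ?_
          rw [hj2, map_neg, hj1]; module
    intro x
    have := hker x
    rw [LinearMap.mem_ker, LinearMap.add_apply, LinearMap.comp_apply, LinearMap.id_apply] at this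
    linear_combination (norm := module) this
  have hjdNN : ∀ x ∈ NN, B.coord (Sum.inl 0) (j x) =
      B.coord (Sum.inl 2) x + B.coord (Sum.inl 3) x := by
    intro x hx
    have : x ∈ LinearMap.ker ((B.coord (Sum.inl 0)) ∘ₗ j - B.coord (Sum.inl 2)
        - B.coord (Sum.inl 3)) := by
      refine span_le.2 ?_ hx
      rintro y ((⟨k, rfl⟩ | ⟨k, rfl⟩) | (rfl | rfl)) <;>
        simp only [SetLike.mem_coe, LinearMap.mem_ker, LinearMap.sub_apply,
          LinearMap.comp_apply]
      · rw [hj1, cdξ', ceξ, czξ]; ring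
      · rw [hj2, map_neg, cdξ, ceξ', czξ']; ring
      · rw [hj3, map_add, cdα, cdδ, ceζ, czζ]; ring
      · rw [hj4, map_sub, cdα, cdδ, ceη, czη]; ring
    rw [LinearMap.mem_ker, LinearMap.sub_apply, LinearMap.sub_apply, LinearMap.comp_apply] at this
    linear_combination this
  have hjaNN : ∀ x ∈ NN, B.coord (Sum.inl 1) (j x) =
      B.coord (Sum.inl 3) x - B.coord (Sum.inl 2) x := by
    intro x hx
    have : x ∈ LinearMap.ker ((B.coord (Sum.inl 1)) ∘ₗ j - B.coord (Sum.inl 3)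
        + B.coord (Sum.inl 2)) := by
      refine span_le.2 ?_ hx
      rintro y ((⟨k, rfl⟩ | ⟨k, rfl⟩) | (rfl | rfl)) <;>
        simp only [SetLike.mem_coe, LinearMap.mem_ker, LinearMap.add_apply,
          LinearMap.sub_apply, LinearMap.comp_apply]
      · rw [hj1, caξ', ceξ, czξ]; ring
      · rw [hj2, map_neg, caξ, ceξ', czξ']; ring
      · rw [hj3, map_add, caα, caδ, ceζ, czζ]; ring
      · rw [hj4, map_sub, caα, caδ, ceη, czη]; ring
    rw [LinearMap.mem_ker, LinearMap.add_apply, LinearMap.sub_apply, LinearMap.comp_apply] at this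
    linear_combination this
  have hNW : ∀ x ∈ NN, j x ∈ NN → x ∈ W := by
    intro x hx hjx
    have h1 := hNd _ hjx
    have h2 := hNa _ hjx
    rw [hjdNN x hx] at h1
    rw [hjaNN x hx] at h2
    have he : B.coord (Sum.inl 2) x = 0 := by linear_combination (h1 - h2) / 2
    have hz : B.coord (Sum.inl 3) x = 0 := by linear_combination (h1 + h2) / 2
    exact hWof x (hN1of x hx he) hz
  -- bracket facts
  have hζc : ∀ x ∈ NN, ⁅ζ, x⁆ = 0 := by
    intro x hx
    have : x ∈ LinearMap.ker (LieAlgebra.ad ℝ g ζ) := by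
      refine span_le.2 ?_ hx
      rintro y ((⟨k, rfl⟩ | ⟨k, rfl⟩) | (rfl | rfl)) <;>
        simp only [SetLike.mem_coe, LinearMap.mem_ker, LieAlgebra.ad_apply]
      · exact hz6 k
      · exact hz7 k
      · exact lie_self _
      · rw [← lie_skew, hz5, neg_zero]
    rwa [LinearMap.mem_ker, LieAlgebra.ad_apply] at this
  have hζr : ∀ x ∈ NN, ⁅x, ζ⁆ = 0 := fun x hx => by
    rw [← lie_skew, hζc x hx, neg_zero]
  have hηE : ∀ x ∈ N1, ⁅η, x⁆ ∈ E := by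
    intro x hx
    have : (LieAlgebra.ad ℝ g η) x ∈ E := by
      refine (Submodule.map_span_le _ _ _).2 ?_ ⟨x, hx, rfl⟩
      rintro y ((⟨k, rfl⟩ | ⟨k, rfl⟩) | rfl) <;> simp only [LieAlgebra.ad_apply]
      · rw [hz4]; exact zero_mem _
      · rw [hb2]; exact smul_mem _ _ (hξE k)
      · rw [hz5]; exact zero_mem _
    rwa [LieAlgebra.ad_apply] at this
  have hηE0 : ∀ x ∈ E, ⁅η, x⁆ = 0 := by
    intro x hx
    have : x ∈ LinearMap.ker (LieAlgebra.ad ℝ g η) := by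
      refine span_le.2 ?_ hx
      rintro y ⟨k, rfl⟩
      simp only [SetLike.mem_coe, LinearMap.mem_ker, LieAlgebra.ad_apply]
      exact hz4 k
    rwa [LinearMap.mem_ker, LieAlgebra.ad_apply] at this
  have hbrZ : ∀ x ∈ N1, ∀ y ∈ N1, ⁅x, y⁆ ∈ (ℝ ∙ ζ) := by
    intro x hx
    induction hx using Submodule.span_induction with
    | mem x hxs =>
      intro y hy
      have hmap : ∀ q : g, (∀ y' ∈ (Set.range ξ ∪ Set.range ξ' ∪ {ζ} : Set g),
          ⁅q, y'⁆ ∈ (ℝ ∙ ζ)) → ⁅q, y⁆ ∈ (ℝ ∙ ζ) := by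
        intro q hq
        have : (LieAlgebra.ad ℝ g q) y ∈ (ℝ ∙ ζ) := by
          refine (Submodule.map_span_le _ _ _).2 ?_ ⟨y, hy, rfl⟩
          intro y' hy'
          simpa only [LieAlgebra.ad_apply] using hq y' hy'
        rwa [LieAlgebra.ad_apply] at this
      rcases hxs with (⟨k, rfl⟩ | ⟨k, rfl⟩) | rfl
      · refine hmap _ ?_
        rintro y' ((⟨l, rfl⟩ | ⟨l, rfl⟩) | rfl)
        · rw [hz8]; exact zero_mem _
        · by_cases hkl : k = l
          · subst hkl; rw [hb1]; exact mem_span_singleton_self ζ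
          · rw [hz10 k l hkl]; exact zero_mem _
        · rw [← lie_skew, hz6, neg_zero]; exact zero_mem _
      · refine hmap _ ?_
        rintro y' ((⟨l, rfl⟩ | ⟨l, rfl⟩) | rfl)
        · rw [← lie_skew]
          by_cases hlk : l = k
          · subst hlk; rw [hb1]; exact neg_mem (mem_span_singleton_self ζ)
          · rw [hz10 l k hlk, neg_zero]; exact zero_mem _
        · rw [hz9]; exact zero_mem _
        · rw [← lie_skew, hz7, neg_zero]; exact zero_mem _
      · refine hmap _ ?_
        rintro y' ((⟨l, rfl⟩ | ⟨l, rfl⟩) | rfl)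
        · rw [hz6]; exact zero_mem _
        · rw [hz7]; exact zero_mem _
        · rw [lie_self]; exact zero_mem _
    | zero => intro y hy; rw [zero_lie]; exact zero_mem _
    | add x₁ x₂ h₁ h₂ ih₁ ih₂ =>
      intro y hy; rw [add_lie]; exact add_mem (ih₁ y hy) (ih₂ y hy)
    | smul r x₁ h₁ ih₁ =>
      intro y hy; rw [smul_lie]; exact smul_mem _ _ (ih₁ y hy)
  -- positivity
  have hfind : LinearIndependent ℝ (Sum.elim ξ ξ') := by
    have := hindep.comp Sum.inr Sum.inr_injective
    rwa [show b ∘ Sum.inr = Sum.elim ξ ξ' from funext fun i => by cases i <;> rfl] at this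
  have sum_lie' : ∀ (f : (Fin (n-2) ⊕ Fin (n-2)) → g) (y : g) (s : Finset (Fin (n-2) ⊕ Fin (n-2))),
      ⁅∑ i ∈ s, f i, y⁆ = ∑ i ∈ s, ⁅f i, y⁆ := by
    intro f y s
    induction s using Finset.induction_on with
    | empty => simp
    | insert _ _ h ih => rw [Finset.sum_insert h, Finset.sum_insert h, add_lie, ih]
  have lie_sum' : ∀ (x : g) (f : (Fin (n-2) ⊕ Fin (n-2)) → g) (s : Finset (Fin (n-2) ⊕ Fin (n-2))),
      ⁅x, ∑ i ∈ s, f i⁆ = ∑ i ∈ s, ⁅x, f i⁆ := by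
    intro x f s
    induction s using Finset.induction_on with
    | empty => simp
    | insert _ _ h ih => rw [Finset.sum_insert h, Finset.sum_insert h, lie_add, ih]
  have hpos : ∀ w ∈ W, w ≠ 0 → ∃ c : ℝ, c ≠ 0 ∧ ⁅w, j w⁆ = c • ζ := by
    intro w hw hw0
    have hw' : w ∈ Submodule.span ℝ (Set.range (Sum.elim ξ ξ')) := by
      rw [Set.Sum.elim_range]; exact hw
    obtain ⟨co, hco'⟩ := (mem_span_range_iff_exists_fun ℝ).1 hw'
    have hfj : ∀ i i' : Fin (n-2) ⊕ Fin (n-2),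
        ⁅Sum.elim ξ ξ' i, j (Sum.elim ξ ξ' i')⁆ = if i = i' then ζ else 0 := by
      rintro (k | k) (l | l) <;> simp only [Sum.elim_inl, Sum.elim_inr]
      · rw [hj1]
        by_cases hkl : k = l
        · subst hkl; rw [hb1]; simp
        · rw [hz10 k l hkl]; simp [hkl]
      · rw [hj2, lie_neg, hz8, neg_zero]; simp
      · rw [hj1, hz9]; simp
      · rw [hj2, lie_neg, ← lie_skew]
        by_cases hkl : l = k
        · subst hkl; rw [hb1]; simp
        · rw [hz10 l k hkl]; simp [Ne.symm hkl]
    have hcomp : ⁅w, j w⁆ = (∑ i, co i ^ 2) • ζ := by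
      rw [← hco', map_sum]
      rw [sum_lie' _ _ _]
      have : ∀ i ∈ Finset.univ, ⁅co i • Sum.elim ξ ξ' i, ∑ i', j (co i' • Sum.elim ξ ξ' i')⁆
          = (co i ^ 2) • ζ := by
        intro i _
        rw [lie_sum' _ _ _]
        have : ∀ i' ∈ Finset.univ,
            ⁅co i • Sum.elim ξ ξ' i, j (co i' • Sum.elim ξ ξ' i')⁆
            = if i = i' then (co i * co i') • ζ else 0 := by
          intro i' _
          rw [map_smul, smul_lie, lie_smul, hfj, smul_smul]
          split <;> simp
        rw [Finset.sum_congr rfl this, Finset.sum_ite_eq]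
        simp [pow_two]
      rw [Finset.sum_congr rfl this, ← Finset.sum_smul]
    refine ⟨∑ i, co i ^ 2, ?_, hcomp⟩
    intro hc0
    apply hw0
    have : ∀ i, co i = 0 := by
      intro i
      have hnn : ∀ i ∈ Finset.univ, (0:ℝ) ≤ co i ^ 2 := fun i _ => sq_nonneg _
      have := (Finset.sum_eq_zero_iff_of_nonneg hnn).1 hc0 i (Finset.mem_univ i)
      exact pow_eq_zero_iff (by norm_num) |>.1 this
    rw [← hco']
    simp [this]
  -- the vector v
  obtain ⟨u, hu𝔫', huN1⟩ := SetLike.not_le_iff_exists.1 h'not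
  have hsub𝔫' : ∀ x ∈ 𝔫', x ∈ NN := by
    intro x hx
    have := h'le hx
    rw [← LieSubalgebra.mem_toSubmodule, h𝔫] at this
    exact this
  have huNN : u ∈ NN := hsub𝔫' u hu𝔫'
  have hae : B.coord (Sum.inl 2) u ≠ 0 := by
    intro h0
    exact huN1 (hN1of u huNN h0)
  obtain ⟨v, hvdef⟩ : ∃ v' : g, v' = (B.coord (Sum.inl 2) u)⁻¹ • u := ⟨_, rfl⟩
  have hv𝔫' : v ∈ 𝔫'.toSubmodule := by rw [hvdef]; exact Submodule.smul_mem _ _ hu𝔫'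
  have hvNN : v ∈ NN := by rw [hvdef]; exact Submodule.smul_mem _ _ huNN
  have hve : B.coord (Sum.inl 2) v = 1 := by
    rw [hvdef, map_smul, smul_eq_mul, inv_mul_cancel₀ hae]
  have hvz0 : B.coord (Sum.inl 0) v = 0 := hNd v hvNN
  set w₀ : g := v - η with hw₀def
  have hw₀N1 : w₀ ∈ N1 := by
    have := hπ1N1 v hvNN
    rwa [hπ1app, hve, one_smul] at this
  have hvsplit : ∀ q : g, ⁅v, q⁆ = ⁅η, q⁆ + ⁅w₀, q⁆ := by
    intro q
    have : v = η + w₀ := by rw [hw₀def]; abel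
    rw [this, add_lie]
  -- U₀
  set Q : Submodule ℝ g := 𝔫'.toSubmodule ⊓ N1 with hQdef
  set U₀ : Submodule ℝ g := Submodule.map π Q with hU₀def
  have hU₀W : U₀ ≤ W := by
    rintro x ⟨u', hu', rfl⟩
    exact hπW u' hu'.2
  have hU₀S : ∀ x ∈ U₀, ⁅η, x⁆ ∈ U₀ := by
    rintro x ⟨q, hq, rfl⟩
    have hqN1 : q ∈ N1 := hq.2
    have hbr𝔫' : ⁅v, q⁆ ∈ 𝔫'.toSubmodule := by
      rw [LieSubalgebra.mem_toSubmodule]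
      exact 𝔫'.lie_mem (by rwa [← LieSubalgebra.mem_toSubmodule]) (by
        rw [← LieSubalgebra.mem_toSubmodule]; exact hq.1)
    obtain ⟨r, hr⟩ := mem_span_singleton.1 (hbrZ w₀ hw₀N1 q hqN1)
    have hηq : ⁅η, q⁆ ∈ E := hηE q hqN1
    have hvq : ⁅v, q⁆ = ⁅η, q⁆ + r • ζ := by rw [hvsplit, hr]
    have hbrN1 : ⁅v, q⁆ ∈ N1 := by
      rw [hvq]
      exact add_mem (hWN1 (hEW hηq)) (smul_mem _ _ hζN1)
    have hπbr : π ⁅v, q⁆ = ⁅η, q⁆ := by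
      rw [hπapp, hvq, map_add, map_smul, hWz _ (hEW hηq), czζ, smul_eq_mul, mul_one]
      module
    have hπq : ⁅η, π q⁆ = ⁅η, q⁆ := by
      rw [hπapp, lie_sub, lie_smul, hz5, smul_zero, sub_zero]
    rw [hπq, ← hπbr]
    exact ⟨⁅v, q⁆, ⟨hbr𝔫', hbrN1⟩, rfl⟩
  have hU₀tr : U₀ ⊓ Submodule.map j U₀ = ⊥ := by
    rw [eq_bot_iff]
    rintro x ⟨hx1, hx2⟩
    rw [mem_bot]
    by_contra hx0
    obtain ⟨u₁, hu₁, hπ1x⟩ := hx1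
    obtain ⟨y, hyU₀, hjyx⟩ := hx2
    obtain ⟨u₂, hu₂, hπ2y⟩ := hyU₀
    have hyW : y ∈ W := by rw [← hπ2y]; exact hπW u₂ hu₂.2
    have hy0 : y ≠ 0 := by
      intro h; apply hx0; rw [← hjyx, h, map_zero]
    obtain ⟨c, hc0, hcbr⟩ := hpos y hyW hy0
    have hbru : ⁅u₂, u₁⁆ = c • ζ := by
      have h2 : u₂ = y + (B.coord (Sum.inl 3) u₂) • ζ := by
        rw [← hπ2y, hπapp]; abel
      have h1 : u₁ = j y + (B.coord (Sum.inl 3) u₁) • ζ := by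
        rw [hjyx, ← hπ1x, hπapp]; abel
      have hjyNN : j y ∈ NN := hN1NN (hWN1 (hjW y hyW))
      have hyNN : y ∈ NN := hN1NN (hWN1 hyW)
      rw [h2, h1]
      simp only [add_lie, lie_add, lie_smul, smul_lie, hζr y hyNN, hζc _ hjyNN,
        lie_self, smul_zero, zero_add, add_zero]
      exact hcbr
    have hζ𝔫' : ζ ∈ 𝔫'.toSubmodule := by
      have hbr𝔫' : ⁅u₂, u₁⁆ ∈ 𝔫'.toSubmodule := by
        rw [LieSubalgebra.mem_toSubmodule]
        exact 𝔫'.lie_mem (by rw [← LieSubalgebra.mem_toSubmodule]; exact hu₂.1)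
          (by rw [← LieSubalgebra.mem_toSubmodule]; exact hu₁.1)
      have : c⁻¹ • ⁅u₂, u₁⁆ ∈ 𝔫'.toSubmodule := Submodule.smul_mem _ _ hbr𝔫'
      rwa [hbru, smul_smul, inv_mul_cancel₀ hc0, one_smul] at this
    have hx𝔫' : x ∈ 𝔫'.toSubmodule := by
      rw [← hπ1x, hπapp]
      exact sub_mem hu₁.1 (Submodule.smul_mem _ _ hζ𝔫')
    have hy𝔫' : y ∈ 𝔫'.toSubmodule := by
      rw [← hπ2y, hπapp]
      exact sub_mem hu₂.1 (Submodule.smul_mem _ _ hζ𝔫')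
    have : x ∈ 𝔫'.toSubmodule ⊓ (𝔫'.toSubmodule.map j) :=
      ⟨hx𝔫', ⟨y, hy𝔫', hjyx⟩⟩
    rw [h'tr] at this
    exact hx0 (by simpa using this)
  -- dimension of W
  have hdimW : finrank ℝ W = 2 * (n - 2) := by
    rw [hWdef, ← Set.Sum.elim_range, finrank_span_eq_card hfind]
    simp [Fintype.card_sum]
    omega
  -- extend to maximal totally real L
  have hW2 : W ≤ E ⊔ Submodule.map j E := by
    rw [hWdef, span_le]
    rintro y (⟨k, rfl⟩ | ⟨k, rfl⟩)
    · exact Submodule.mem_sup_left (hξE k)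
    · exact Submodule.mem_sup_right ⟨ξ k, hξE k, hj1 k⟩
  have hSE : ∀ x ∈ E, (LieAlgebra.ad ℝ g η) x = 0 := by
    intro x hx; rw [LieAlgebra.ad_apply]; exact hηE0 x hx
  have hU₀S' : ∀ x ∈ U₀, (LieAlgebra.ad ℝ g η) x ∈ U₀ := by
    intro x hx; rw [LieAlgebra.ad_apply]; exact hU₀S x hx
  obtain ⟨L, hU₀L, hLW, hLtr, hLS', hLrank⟩ :=
    ext_tr_aux g j (LieAlgebra.ad ℝ g η) W E (n - 2) hjj hjW hEW hW2 hSE hdimW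
      U₀ hU₀W hU₀tr hU₀S'
  have hLS : ∀ x ∈ L, ⁅η, x⁆ ∈ L := by
    intro x hx
    have := hLS' x hx
    rwa [LieAlgebra.ad_apply] at this
  -- assemble m
  set msub : Submodule ℝ g := (ℝ ∙ v) ⊔ ((ℝ ∙ ζ) ⊔ L) with hmsubdef
  have hvmsub : v ∈ msub := Submodule.mem_sup_left (mem_span_singleton_self v)
  have hζmsub : ζ ∈ msub := Submodule.mem_sup_right (Submodule.mem_sup_left
    (mem_span_singleton_self ζ))
  have hLmsub : L ≤ msub := le_trans le_sup_right le_sup_right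
  have hmNN : msub ≤ NN :=
    sup_le ((span_singleton_le_iff_mem _ _).2 hvNN)
      (sup_le ((span_singleton_le_iff_mem _ _).2 hζNN)
        (le_trans hLW (le_trans hWN1 hN1NN)))
  have hmdec : ∀ x ∈ msub, ∃ r s : ℝ, ∃ l ∈ L, x = r • v + (s • ζ + l) := by
    intro x hx
    rcases Submodule.mem_sup.1 hx with ⟨p, hp, q, hq, rfl⟩
    rcases mem_span_singleton.1 hp with ⟨r, rfl⟩
    rcases Submodule.mem_sup.1 hq with ⟨p', hp', l, hl, rfl⟩
    rcases mem_span_singleton.1 hp' with ⟨s, rfl⟩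
    exact ⟨r, s, l, hl, rfl⟩
  have hv_l : ∀ l ∈ L, ⁅v, l⁆ ∈ msub := by
    intro l hl
    rw [hvsplit]
    refine add_mem (hLmsub (hLS l hl)) ?_
    obtain ⟨r, hr⟩ := mem_span_singleton.1 (hbrZ w₀ hw₀N1 l (hWN1 (hLW hl)))
    rw [← hr]
    exact Submodule.smul_mem _ _ hζmsub
  have hclose : ∀ x ∈ msub, ∀ y ∈ msub, ⁅x, y⁆ ∈ msub := by
    have Hv : ∀ y ∈ msub, ⁅v, y⁆ ∈ msub := by
      intro y hy
      obtain ⟨r, s, l, hl, rfl⟩ := hmdec y hy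
      have e1 : ⁅v, r • v + (s • ζ + l)⁆ = r • ⁅v, v⁆ + (s • ⁅v, ζ⁆ + ⁅v, l⁆) := by
        simp only [lie_add, lie_smul]
      rw [e1, lie_self, hζr v hvNN, smul_zero, smul_zero, zero_add, zero_add]
      exact hv_l l hl
    have Hl : ∀ l ∈ L, ∀ y ∈ msub, ⁅l, y⁆ ∈ msub := by
      intro l hl y hy
      obtain ⟨r, s, l', hl', rfl⟩ := hmdec y hy
      have hlNN : l ∈ NN := hmNN (hLmsub hl)
      have e1 : ⁅l, r • v + (s • ζ + l')⁆ = r • ⁅l, v⁆ + (s • ⁅l, ζ⁆ + ⁅l, l'⁆) := by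
        simp only [lie_add, lie_smul]
      rw [e1, hζr l hlNN, smul_zero, zero_add]
      refine add_mem (Submodule.smul_mem _ _ ?_) ?_
      · rw [← lie_skew]
        exact neg_mem (hv_l l hl)
      · obtain ⟨r', hr'⟩ := mem_span_singleton.1
          (hbrZ l (hWN1 (hLW hl)) l' (hWN1 (hLW hl')))
        rw [← hr']
        exact Submodule.smul_mem _ _ hζmsub
    intro x hx y hy
    obtain ⟨r, s, l, hl, rfl⟩ := hmdec x hx
    have e1 : ⁅r • v + (s • ζ + l), y⁆ = r • ⁅v, y⁆ + (s • ⁅ζ, y⁆ + ⁅l, y⁆) := by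
      simp only [add_lie, smul_lie]
    rw [e1, hζc y (hmNN hy), smul_zero, zero_add]
    exact add_mem (Submodule.smul_mem _ _ (Hv y hy)) (Hl l hl y hy)
  set m : LieSubalgebra ℝ g :=
    { msub with lie_mem' := fun {x y} hx hy => hclose x hx y hy } with hmdef
  have hmto : m.toSubmodule = msub := rfl
  have hmem : ∀ x : g, x ∈ m ↔ x ∈ msub := fun x => Iff.rfl
  refine ⟨m, ?_, ?_, ?_, ?_⟩
  · -- 𝔫' ≤ m
    intro x hx
    rw [hmem]
    have hx' : x ∈ 𝔫'.toSubmodule := hx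
    have hxNN : x ∈ NN := hsub𝔫' x hx
    set q : g := x - (B.coord (Sum.inl 2) x) • v with hqdef2
    have hq𝔫' : q ∈ 𝔫'.toSubmodule := sub_mem hx' (Submodule.smul_mem _ _ hv𝔫')
    have hqNN : q ∈ NN := sub_mem hxNN (Submodule.smul_mem _ _ hvNN)
    have hqe : B.coord (Sum.inl 2) q = 0 := by
      rw [hqdef2, map_sub, map_smul, hve, smul_eq_mul, mul_one, sub_self]
    have hqN1 : q ∈ N1 := hN1of q hqNN hqe
    have hπqU₀ : π q ∈ U₀ := ⟨q, ⟨hq𝔫', hqN1⟩, rfl⟩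
    have hxeq : x = (B.coord (Sum.inl 2) x) • v +
        ((B.coord (Sum.inl 3) q) • ζ + π q) := by
      rw [hπapp, hqdef2]; abel
    rw [hxeq]
    exact add_mem (Submodule.mem_sup_left (Submodule.smul_mem _ _ (mem_span_singleton_self v)))
      (Submodule.mem_sup_right (add_mem
        (Submodule.mem_sup_left (Submodule.smul_mem _ _ (mem_span_singleton_self ζ)))
        (Submodule.mem_sup_right (hU₀L hπqU₀))))
  · -- m ≤ 𝔫
    intro x hx
    rw [hmem] at hx
    have : x ∈ 𝔫.toSubmodule := by rw [h𝔫]; exact hmNN hx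
    exact this
  · -- totally real
    rw [hmto, eq_bot_iff]
    rintro x ⟨hx1, hx2⟩
    obtain ⟨y, hy, hjyx⟩ := hx2
    have hLsub : ∀ p ∈ msub, p ∈ W → p ∈ L := by
      intro p hp hpW
      obtain ⟨r, s, l, hl, rfl⟩ := hmdec p hp
      have he0 : r = 0 := by
        have h := hWe _ hpW
        simp only [map_add, map_smul, hve, ceζ, hWe l (hLW hl), smul_eq_mul, mul_one,
          mul_zero, add_zero] at h
        exact h
      subst he0
      have hz0 : s = 0 := by
        have h := hWz _ hpW
        simp only [map_add, map_smul, czζ, hWz l (hLW hl), zero_smul, zero_add, map_zero,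
          smul_eq_mul, mul_one, mul_zero, add_zero, smul_zero] at h
        exact h
      subst hz0
      simpa using hl
    have hyNN : y ∈ NN := hmNN hy
    have hxNN : x ∈ NN := hmNN hx1
    have hyW : y ∈ W := hNW y hyNN (by rw [hjyx]; exact hxNN)
    have hyL : y ∈ L := hLsub y hy hyW
    have hxW : x ∈ W := by rw [← hjyx]; exact hjW y hyW
    have hxL : x ∈ L := hLsub x hx1 hxW
    have : x ∈ L ⊓ Submodule.map j L := ⟨hxL, ⟨y, hyL, hjyx⟩⟩
    rw [hLtr] at this
    simpa using this
  · -- dimension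
    have hζ0 : ζ ≠ 0 := by intro h; rw [h, map_zero] at czζ; exact zero_ne_one czζ
    have hv0 : v ≠ 0 := by intro h; rw [h, map_zero] at hve; exact zero_ne_one hve
    have hinf1 : (ℝ ∙ ζ) ⊓ L = ⊥ := by
      rw [eq_bot_iff]
      rintro x ⟨hx1, hx2⟩
      obtain ⟨r, rfl⟩ := mem_span_singleton.1 hx1
      have h := hWz _ (hLW hx2)
      rw [map_smul, czζ, smul_eq_mul, mul_one] at h
      simp [h]
    have hk1 : finrank ℝ ↥((ℝ ∙ ζ) ⊔ L) = (n - 2) + 1 := by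
      have h2 := Submodule.finrank_sup_add_finrank_inf_eq (ℝ ∙ ζ) L
      rw [hinf1, finrank_bot, finrank_span_singleton hζ0, hLrank] at h2
      omega
    have hKN1 : ((ℝ ∙ ζ) ⊔ L) ≤ N1 :=
      sup_le ((span_singleton_le_iff_mem _ _).2 hζN1) (le_trans hLW hWN1)
    have hinf2 : (ℝ ∙ v) ⊓ ((ℝ ∙ ζ) ⊔ L) = ⊥ := by
      rw [eq_bot_iff]
      rintro x ⟨hx1, hx2⟩
      obtain ⟨r, rfl⟩ := mem_span_singleton.1 hx1
      have h := hN1e _ (hKN1 hx2)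
      rw [map_smul, hve, smul_eq_mul, mul_one] at h
      simp [h]
    have h3 := Submodule.finrank_sup_add_finrank_inf_eq (ℝ ∙ v) ((ℝ ∙ ζ) ⊔ L)
    rw [hinf2, finrank_bot, finrank_span_singleton hv0, hk1, ← hmsubdef] at h3
    have hfin : Module.finrank ℝ ↥m = finrank ℝ ↥msub := rfl
    rw [hfin]
    omega
end

section
/- Let g, j and 𝔫 be the normal j-algebra data of the 3-dimensional Lie ball, i.e. the case n = 3 of the presentation in the context, with basis δ, α, η, ζ, ξ_1, ξ'_1. Then the one-dimensional totally real Lie subalgebra ℝξ'_1 of 𝔫 is not contained in any maximal totally real Lie subalgebra of 𝔫; that is, there is no Lie subalgebra m of 𝔫 with ξ'_1 ∈ m, m ∩ j(m) = {0}, and dim_ℝ m = 3. -/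
/-- Let `g` (with linear map `j` and nilradical `𝔫`) be the normal
`j`-algebra of the 3-dimensional Lie ball, with basis `δ, α, η, ζ, ξ₁, ξ'₁`, only
nonvanishing brackets `[ξ₁,ξ'₁] = ζ`, `[η,ξ'₁] = 2ξ₁`, `[δ,ξ₁] = -ξ₁`, `[δ,ζ] = -ζ`,
`[δ,η] = -η`, `[α,ξ'₁] = -ξ'₁`, `[α,ζ] = -ζ`, `[α,η] = η`, and
`j(ξ₁) = ξ'₁`, `j(ξ'₁) = -ξ₁`, `j(ζ) = α + δ`, `j(η) = δ - α`, `j(δ) = -(ζ+η)/2`,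
`j(α) = (η-ζ)/2`; `𝔫` is spanned by `ξ₁, ξ'₁, ζ, η`. Then the totally real subalgebra
`ℝξ'₁` of `𝔫` is not contained in any maximal totally real Lie subalgebra of `𝔫`: there
is no Lie subalgebra `m` of `𝔫` with `ξ'₁ ∈ m`, `m ∩ j(m) = {0}` and `dim_ℝ m = 3`. -/
theorem statement4 (g : Type*) [LieRing g] [LieAlgebra ℝ g]
    (δ α η ζ ξ₁ ξ'₁ : g)
    (hindep : LinearIndependent ℝ ![δ, α, η, ζ, ξ₁, ξ'₁])
    (hspan : Submodule.span ℝ (Set.range ![δ, α, η, ζ, ξ₁, ξ'₁]) = ⊤)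
    (hb1 : ⁅ξ₁, ξ'₁⁆ = ζ)
    (hb2 : ⁅η, ξ'₁⁆ = (2 : ℝ) • ξ₁)
    (hb3 : ⁅δ, ξ₁⁆ = -ξ₁)
    (hb4 : ⁅δ, ζ⁆ = -ζ)
    (hb5 : ⁅δ, η⁆ = -η)
    (hb6 : ⁅α, ξ'₁⁆ = -ξ'₁)
    (hb7 : ⁅α, ζ⁆ = -ζ)
    (hb8 : ⁅α, η⁆ = η)
    (hz1 : ⁅δ, α⁆ = (0 : g))
    (hz2 : ⁅δ, ξ'₁⁆ = (0 : g))
    (hz3 : ⁅α, ξ₁⁆ = (0 : g))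
    (hz4 : ⁅η, ξ₁⁆ = (0 : g))
    (hz5 : ⁅η, ζ⁆ = (0 : g))
    (hz6 : ⁅ζ, ξ₁⁆ = (0 : g))
    (hz7 : ⁅ζ, ξ'₁⁆ = (0 : g))
    (j : g →ₗ[ℝ] g)
    (hj1 : j ξ₁ = ξ'₁) (hj2 : j ξ'₁ = -ξ₁)
    (hj3 : j ζ = α + δ) (hj4 : j η = δ - α)
    (hj5 : j δ = -((1 / 2 : ℝ) • (ζ + η))) (hj6 : j α = (1 / 2 : ℝ) • (η - ζ))
    (𝔫 : LieSubalgebra ℝ g)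
    (h𝔫 : 𝔫.toSubmodule = Submodule.span ℝ {ξ₁, ξ'₁, ζ, η}) :
    ¬ ∃ m : LieSubalgebra ℝ g, m ≤ 𝔫 ∧ ξ'₁ ∈ m ∧
        m.toSubmodule ⊓ (m.toSubmodule.map j) = ⊥ ∧ Module.finrank ℝ m = 3 := by
  rintro ⟨m, hm𝔫, hξ'm, htr, hdim⟩
  classical
  haveI : FiniteDimensional ℝ g := Module.Finite.of_basis (Module.Basis.mk hindep hspan.ge)
  have hne : ξ'₁ ≠ 0 := by simpa using hindep.ne_zero 5
  -- linear independence of the four nilradical generators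
  have hi4 : LinearIndependent ℝ ![ξ₁, ξ'₁, ζ, η] := by
    have := hindep.comp ![4, 5, 3, 2] (by decide)
    convert this using 1
    funext i; fin_cases i <;> rfl
  have hi3 : LinearIndependent ℝ ![ξ₁, ξ'₁, ζ] := by
    have := hindep.comp ![4, 5, 3] (by decide)
    convert this using 1
    funext i; fin_cases i <;> rfl
  have hset4 : ({ξ₁, ξ'₁, ζ, η} : Set g) = Set.range ![ξ₁, ξ'₁, ζ, η] := by
    ext x; simp [Matrix.range_cons, Matrix.range_empty]; tauto
  have hdim' : Module.finrank ℝ m.toSubmodule = 3 := hdim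
  -- every element of m lies in span {ξ₁, ξ'₁, ζ}
  have hkey : ∀ v ∈ m, v ∈ Submodule.span ℝ (Set.range ![ξ₁, ξ'₁, ζ]) := by
    intro v hv
    have hv𝔫 : v ∈ Submodule.span ℝ (Set.range ![ξ₁, ξ'₁, ζ, η]) := by
      have h1 : v ∈ 𝔫.toSubmodule := hm𝔫 hv
      rw [h𝔫, hset4] at h1
      exact h1
    rw [Submodule.mem_span_range_iff_exists_fun] at hv𝔫
    obtain ⟨c, hc⟩ := hv𝔫
    rw [Fin.sum_univ_four] at hc
    simp only [Matrix.cons_val_zero, Matrix.cons_val_one, Matrix.head_cons,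
      Matrix.cons_val_two, Matrix.tail_cons, Matrix.cons_val_three] at hc
    -- hc : c 0 • ξ₁ + c 1 • ξ'₁ + c 2 • ζ + c 3 • η = v
    by_cases hd : c 3 = 0
    · rw [Submodule.mem_span_range_iff_exists_fun]
      refine ⟨![c 0, c 1, c 2], ?_⟩
      rw [Fin.sum_univ_three]
      simp only [Matrix.cons_val_zero, Matrix.cons_val_one, Matrix.head_cons,
        Matrix.cons_val_two, Matrix.tail_cons]
      rw [← hc, hd, zero_smul, add_zero]
    · exfalso
      -- ⁅v, ξ'₁⁆ ∈ m
      have hw1 : ⁅v, ξ'₁⁆ = (2 * c 3) • ξ₁ + c 0 • ζ := by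
        rw [← hc]
        simp only [add_lie, smul_lie, hb1, hb2, hz7, lie_self, smul_zero, add_zero,
          smul_smul]
        module
      have hw1m : (2 * c 3) • ξ₁ + c 0 • ζ ∈ m := hw1 ▸ m.lie_mem hv hξ'm
      have hw2 : ⁅(2 * c 3) • ξ₁ + c 0 • ζ, ξ'₁⁆ = (2 * c 3) • ζ := by
        simp [add_lie, smul_lie, hb1, hz7]
      have hζm : ζ ∈ m := by
        have h2 : (2 * c 3) • ζ ∈ m := hw2 ▸ m.lie_mem hw1m hξ'm
        have := m.smul_mem (2 * c 3)⁻¹ h2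
        rwa [inv_smul_smul₀ (by simpa using hd)] at this
      have hξm : ξ₁ ∈ m := by
        have h2 : (2 * c 3) • ξ₁ ∈ m := by
          have := m.sub_mem hw1m (m.smul_mem (c 0) hζm)
          simpa using this
        have := m.smul_mem (2 * c 3)⁻¹ h2
        rwa [inv_smul_smul₀ (by simpa using hd)] at this
      have hηm : η ∈ m := by
        have h2 : (c 3) • η ∈ m := by
          have := m.sub_mem (m.sub_mem (m.sub_mem hv (m.smul_mem (c 0) hξm))
            (m.smul_mem (c 1) hξ'm)) (m.smul_mem (c 2) hζm)
          rw [← hc] at this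
          convert this using 1
          abel
        have := m.smul_mem (c 3)⁻¹ h2
        rwa [inv_smul_smul₀ hd] at this
      -- then 𝔫 ≤ m, so finrank m ≥ 4
      have hle : 𝔫.toSubmodule ≤ m.toSubmodule := by
        rw [h𝔫, Submodule.span_le]
        intro x hx
        simp only [Set.mem_insert_iff, Set.mem_singleton_iff] at hx
        rcases hx with rfl | rfl | rfl | rfl
        exacts [hξm, hξ'm, hζm, hηm]
      have h4 : Module.finrank ℝ 𝔫.toSubmodule = 4 := by
        rw [h𝔫, hset4]
        simpa using finrank_span_eq_card hi4
      have := Submodule.finrank_mono hle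
      rw [h4, hdim'] at this
      omega
  -- hence m ⊆ span {ξ₁, ξ'₁, ζ}, and by dimension they are equal
  have hU : Module.finrank ℝ (Submodule.span ℝ (Set.range ![ξ₁, ξ'₁, ζ])) = 3 := by
    simpa using finrank_span_eq_card hi3
  haveI : FiniteDimensional ℝ (Submodule.span ℝ (Set.range ![ξ₁, ξ'₁, ζ])) := by
    apply FiniteDimensional.span_of_finite
    exact (Set.finite_range _)
  have hmeq : m.toSubmodule = Submodule.span ℝ (Set.range ![ξ₁, ξ'₁, ζ]) := by
    apply Submodule.eq_of_le_of_finrank_le (fun x hx => hkey x hx)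
    rw [hU, hdim']
  have hξ₁m : ξ₁ ∈ m.toSubmodule := by
    rw [hmeq]
    exact Submodule.subset_span ⟨0, rfl⟩
  have : ξ'₁ ∈ m.toSubmodule ⊓ (m.toSubmodule.map j) := by
    refine ⟨hξ'm, ⟨ξ₁, hξ₁m, hj1⟩⟩
  rw [htr] at this
  exact hne (by simpa using this)
end

section
/- Let g, j and 𝔫 be the 10-dimensional Lie algebra data described in the context, and set x₁ := ξ'₃₁ + ζ₃ + ξ₂₁, x₂ := −ξ₃₁ + ξ'₂₁, x₃ := ζ₃ + ζ₂ (these satisfy [x₁, x₂] = x₃ and span a 3-dimensional Heisenberg subalgebra 𝔫_Γ of 𝔫 with 𝔫_Γ ∩ j(𝔫_Γ) = {0}). Then 𝔫_Γ is not contained in any maximal totally real Lie subalgebra of 𝔫; that is, there is no Lie subalgebra m of 𝔫 with x₁, x₂, x₃ ∈ m, m ∩ j(m) = {0}, and dim_ℝ m = 5. -/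
set_option maxHeartbeats 1000000


/-- Let `g` be the 10-dimensional normal `j`-algebra (of a 5-dimensional
bounded homogeneous domain in the Siegel disk `𝕊₃`) with basis
`α₃, ξ₃₁, ξ₃₂, ξ'₃₁, ξ'₃₂, ζ₃, α₂, ξ₂₁, ξ'₂₁, ζ₂`, brackets and complex structure `j`
as in the paper, and nilradical `𝔫` spanned by `ξ₃₁, ξ₃₂, ξ'₃₁, ξ'₃₂, ζ₃, ξ₂₁, ξ'₂₁, ζ₂`.
Set `x₁ := ξ'₃₁ + ζ₃ + ξ₂₁`, `x₂ := -ξ₃₁ + ξ'₂₁`, `x₃ := ζ₃ + ζ₂`. Then the Heisenberg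
subalgebra `𝔫_Γ` they span is not contained in any maximal totally real Lie subalgebra of
`𝔫`: there is no Lie subalgebra `m` of `𝔫` with `x₁, x₂, x₃ ∈ m`, `m ∩ j(m) = {0}`, and
`dim_ℝ m = 5`. -/
theorem statement5 (g : Type*) [LieRing g] [LieAlgebra ℝ g]
    (α₃ ξ₃₁ ξ₃₂ ξ'₃₁ ξ'₃₂ ζ₃ α₂ ξ₂₁ ξ'₂₁ ζ₂ : g)
    (hindep : LinearIndependent ℝ ![α₃, ξ₃₁, ξ₃₂, ξ'₃₁, ξ'₃₂, ζ₃, α₂, ξ₂₁, ξ'₂₁, ζ₂])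
    (hspan : Submodule.span ℝ
      (Set.range ![α₃, ξ₃₁, ξ₃₂, ξ'₃₁, ξ'₃₂, ζ₃, α₂, ξ₂₁, ξ'₂₁, ζ₂]) = ⊤)
    -- nonvanishing brackets
    (hb1 : ⁅ξ₃₁, ξ'₃₁⁆ = ζ₃)
    (hb2 : ⁅ξ₃₂, ξ'₃₂⁆ = ζ₃)
    (hb3 : ⁅α₃, ξ₃₁⁆ = -ξ₃₁)
    (hb4 : ⁅α₃, ξ₃₂⁆ = -ξ₃₂)
    (hb5 : ⁅α₃, ξ'₃₁⁆ = -ξ'₃₁)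
    (hb6 : ⁅α₃, ξ'₃₂⁆ = -ξ'₃₂)
    (hb7 : ⁅α₃, ζ₃⁆ = (-2 : ℝ) • ζ₃)
    (hb8 : ⁅ξ₂₁, ξ'₂₁⁆ = ζ₂)
    (hb9 : ⁅α₂, ξ₂₁⁆ = -ξ₂₁)
    (hb10 : ⁅α₂, ξ'₂₁⁆ = -ξ'₂₁)
    (hb11 : ⁅α₂, ζ₂⁆ = (-2 : ℝ) • ζ₂)
    (hb12 : ⁅α₂, ξ₃₂⁆ = ξ₃₂)
    (hb13 : ⁅α₂, ξ'₃₂⁆ = -ξ'₃₂)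
    (hb14 : ⁅ξ₂₁, ξ'₃₁⁆ = -ξ₃₂)
    (hb15 : ⁅ξ₂₁, ξ'₃₂⁆ = -ξ₃₁)
    (hb16 : ⁅ξ'₂₁, ξ₃₁⁆ = ξ₃₂)
    (hb17 : ⁅ξ'₂₁, ξ'₃₂⁆ = -ξ'₃₁)
    (hb18 : ⁅ζ₂, ξ'₃₂⁆ = (2 : ℝ) • ξ₃₂)
    -- vanishing brackets (all remaining pairs of basis vectors)
    (hz1 : ⁅α₃, α₂⁆ = (0 : g))
    (hz2 : ⁅α₃, ξ₂₁⁆ = (0 : g))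
    (hz3 : ⁅α₃, ξ'₂₁⁆ = (0 : g))
    (hz4 : ⁅α₃, ζ₂⁆ = (0 : g))
    (hz5 : ⁅ξ₃₁, ξ₃₂⁆ = (0 : g))
    (hz6 : ⁅ξ₃₁, ξ'₃₂⁆ = (0 : g))
    (hz7 : ⁅ξ₃₁, ζ₃⁆ = (0 : g))
    (hz8 : ⁅ξ₃₁, α₂⁆ = (0 : g))
    (hz9 : ⁅ξ₃₁, ξ₂₁⁆ = (0 : g))
    (hz10 : ⁅ξ₃₁, ζ₂⁆ = (0 : g))
    (hz11 : ⁅ξ₃₂, ξ'₃₁⁆ = (0 : g))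
    (hz12 : ⁅ξ₃₂, ζ₃⁆ = (0 : g))
    (hz13 : ⁅ξ₃₂, ξ₂₁⁆ = (0 : g))
    (hz14 : ⁅ξ₃₂, ξ'₂₁⁆ = (0 : g))
    (hz15 : ⁅ξ₃₂, ζ₂⁆ = (0 : g))
    (hz16 : ⁅ξ'₃₁, ξ'₃₂⁆ = (0 : g))
    (hz17 : ⁅ξ'₃₁, ζ₃⁆ = (0 : g))
    (hz18 : ⁅ξ'₃₁, α₂⁆ = (0 : g))
    (hz19 : ⁅ξ'₃₁, ξ'₂₁⁆ = (0 : g))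
    (hz20 : ⁅ξ'₃₁, ζ₂⁆ = (0 : g))
    (hz21 : ⁅ξ'₃₂, ζ₃⁆ = (0 : g))
    (hz22 : ⁅ζ₃, α₂⁆ = (0 : g))
    (hz23 : ⁅ζ₃, ξ₂₁⁆ = (0 : g))
    (hz24 : ⁅ζ₃, ξ'₂₁⁆ = (0 : g))
    (hz25 : ⁅ζ₃, ζ₂⁆ = (0 : g))
    (hz26 : ⁅ξ₂₁, ζ₂⁆ = (0 : g))
    (hz27 : ⁅ξ'₂₁, ζ₂⁆ = (0 : g))
    -- the complex structure
    (j : g →ₗ[ℝ] g)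
    (hj1 : j ξ₃₁ = ξ'₃₁) (hj2 : j ξ₃₂ = ξ'₃₂)
    (hj3 : j ξ'₃₁ = -ξ₃₁) (hj4 : j ξ'₃₂ = -ξ₃₂)
    (hj5 : j ζ₃ = α₃) (hj6 : j α₃ = -ζ₃)
    (hj7 : j ξ₂₁ = ξ'₂₁) (hj8 : j ξ'₂₁ = -ξ₂₁)
    (hj9 : j ζ₂ = α₂) (hj10 : j α₂ = -ζ₂)
    -- the nilradical
    (𝔫 : LieSubalgebra ℝ g)
    (h𝔫 : 𝔫.toSubmodule = Submodule.span ℝ {ξ₃₁, ξ₃₂, ξ'₃₁, ξ'₃₂, ζ₃, ξ₂₁, ξ'₂₁, ζ₂}) :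
    ¬ ∃ m : LieSubalgebra ℝ g, m ≤ 𝔫 ∧
        (ξ'₃₁ + ζ₃ + ξ₂₁) ∈ m ∧ (-ξ₃₁ + ξ'₂₁) ∈ m ∧ (ζ₃ + ζ₂) ∈ m ∧
        m.toSubmodule ⊓ (m.toSubmodule.map j) = ⊥ ∧ Module.finrank ℝ m = 5 := by
  rintro ⟨m, hmn, hx1, hx2, hx3, hreal, hdim⟩
  -- reversed brackets
  have r1 : ⁅ξ'₃₁, ξ₃₁⁆ = -ζ₃ := by rw [← lie_skew, hb1]
  have r2 : ⁅ξ'₃₁, ξ₂₁⁆ = ξ₃₂ := by rw [← lie_skew, hb14, neg_neg]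
  have r3 : ⁅ζ₃, ξ₃₁⁆ = (0 : g) := by rw [← lie_skew, hz7, neg_zero]
  have r4 : ⁅ζ₃, ξ₃₂⁆ = (0 : g) := by rw [← lie_skew, hz12, neg_zero]
  have r5 : ⁅ζ₃, ξ'₃₁⁆ = (0 : g) := by rw [← lie_skew, hz17, neg_zero]
  have r6 : ⁅ζ₃, ξ'₃₂⁆ = (0 : g) := by rw [← lie_skew, hz21, neg_zero]
  have r7 : ⁅ξ₂₁, ξ₃₁⁆ = (0 : g) := by rw [← lie_skew, hz9, neg_zero]
  have r8 : ⁅ξ₂₁, ξ₃₂⁆ = (0 : g) := by rw [← lie_skew, hz13, neg_zero]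
  have r9 : ⁅ξ₂₁, ζ₃⁆ = (0 : g) := by rw [← lie_skew, hz23, neg_zero]
  have r10 : ⁅ξ₃₁, ξ'₂₁⁆ = -ξ₃₂ := by rw [← lie_skew, hb16]
  have r11 : ⁅ξ'₂₁, ξ₃₂⁆ = (0 : g) := by rw [← lie_skew, hz14, neg_zero]
  have r12 : ⁅ξ'₂₁, ξ'₃₁⁆ = (0 : g) := by rw [← lie_skew, hz19, neg_zero]
  have r13 : ⁅ξ'₂₁, ζ₃⁆ = (0 : g) := by rw [← lie_skew, hz24, neg_zero]
  have r14 : ⁅ξ'₂₁, ξ₂₁⁆ = -ζ₂ := by rw [← lie_skew, hb8]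
  have r15 : ⁅ζ₂, ξ₃₁⁆ = (0 : g) := by rw [← lie_skew, hz10, neg_zero]
  have r16 : ⁅ζ₂, ξ₃₂⁆ = (0 : g) := by rw [← lie_skew, hz15, neg_zero]
  have r17 : ⁅ζ₂, ξ'₃₁⁆ = (0 : g) := by rw [← lie_skew, hz20, neg_zero]
  have r18 : ⁅ζ₂, ζ₃⁆ = (0 : g) := by rw [← lie_skew, hz25, neg_zero]
  have r19 : ⁅ζ₂, ξ₂₁⁆ = (0 : g) := by rw [← lie_skew, hz26, neg_zero]
  have r20 : ⁅ζ₂, ξ'₂₁⁆ = (0 : g) := by rw [← lie_skew, hz27, neg_zero]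
  have r21 : ⁅ξ₃₂, ξ₃₁⁆ = (0 : g) := by rw [← lie_skew, hz5, neg_zero]
  have r22 : ⁅ξ'₃₁, ξ₃₂⁆ = (0 : g) := by rw [← lie_skew, hz11, neg_zero]
  -- x₂ ≠ 0
  have hx2ne : (-ξ₃₁ + ξ'₂₁ : g) ≠ 0 := by
    intro h0
    have heq : ξ₃₁ = ξ'₂₁ := neg_add_eq_zero.mp h0
    have h18 : (1 : Fin 10) = 8 := hindep.injective heq
    exact absurd h18 (by decide)
  -- v = ξ'₃₁ + ξ₂₁ is not in m
  have hvnot : ξ'₃₁ + ξ₂₁ ∉ m := by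
    intro hv
    have hjv : j (ξ'₃₁ + ξ₂₁) = -ξ₃₁ + ξ'₂₁ := by rw [map_add, hj3, hj7]
    have hmem : (-ξ₃₁ + ξ'₂₁ : g) ∈ m.toSubmodule ⊓ (m.toSubmodule.map j) :=
      ⟨hx2, ⟨ξ'₃₁ + ξ₂₁, hv, hjv⟩⟩
    rw [hreal, Submodule.mem_bot] at hmem
    exact hx2ne hmem
  -- ζ₃ is not in m
  have hznot : ζ₃ ∉ m := by
    intro hz
    have h1 : (ξ'₃₁ + ζ₃ + ξ₂₁) - ζ₃ ∈ m := sub_mem hx1 hz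
    have h2 : (ξ'₃₁ + ζ₃ + ξ₂₁) - ζ₃ = ξ'₃₁ + ξ₂₁ := by abel
    rw [h2] at h1
    exact hvnot h1
  -- every element of m lies in the 5-dimensional space S
  set S : Submodule ℝ g :=
    Submodule.span ℝ (Set.range ![ξ₃₁ - ξ'₂₁, ξ₃₂, ξ'₃₁ + ξ₂₁, ζ₃, ζ₂]) with hS
  have main : ∀ y, y ∈ m → y ∈ S := by
    intro y hy
    -- decompose y over the nilradical generators
    have hy8 : y ∈ Submodule.span ℝ
        (Set.range ![ξ₃₁, ξ₃₂, ξ'₃₁, ξ'₃₂, ζ₃, ξ₂₁, ξ'₂₁, ζ₂]) := by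
      have hsub : ({ξ₃₁, ξ₃₂, ξ'₃₁, ξ'₃₂, ζ₃, ξ₂₁, ξ'₂₁, ζ₂} : Set g)
          ⊆ Set.range ![ξ₃₁, ξ₃₂, ξ'₃₁, ξ'₃₂, ζ₃, ξ₂₁, ξ'₂₁, ζ₂] := by
        intro z hz
        simp only [Set.mem_insert_iff, Set.mem_singleton_iff] at hz
        rcases hz with rfl | rfl | rfl | rfl | rfl | rfl | rfl | rfl
        · exact ⟨0, rfl⟩
        · exact ⟨1, rfl⟩
        · exact ⟨2, rfl⟩
        · exact ⟨3, rfl⟩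
        · exact ⟨4, rfl⟩
        · exact ⟨5, rfl⟩
        · exact ⟨6, rfl⟩
        · exact ⟨7, rfl⟩
      exact Submodule.span_mono hsub (by rw [← h𝔫]; exact hmn hy)
    obtain ⟨cf, hcf⟩ := (Submodule.mem_span_range_iff_exists_fun ℝ).mp hy8
    rw [Fin.sum_univ_eight] at hcf
    obtain ⟨a1, a2, a3, a4, a5, a7, a8, a9, hyd⟩ :
        ∃ a1 a2 a3 a4 a5 a7 a8 a9 : ℝ, y = a1 • ξ₃₁ + a2 • ξ₃₂ + a3 • ξ'₃₁ +
          a4 • ξ'₃₂ + a5 • ζ₃ + a7 • ξ₂₁ + a8 • ξ'₂₁ + a9 • ζ₂ := by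
      exact ⟨cf 0, cf 1, cf 2, cf 3, cf 4, cf 5, cf 6, cf 7, by rw [← hcf]; rfl⟩
    -- step 1 : a4 = 0
    have ha4 : a4 = 0 := by
      by_contra ha4
      have comp3 : ⁅ζ₃ + ζ₂, y⁆ = (2 * a4) • ξ₃₂ := by
        rw [hyd]
        simp only [lie_add, lie_smul, add_lie, lie_self, r3, r4, r5, r6, hz23, hz24, hz25,
          r15, r16, r17, hb18, r18, r19, r20, smul_zero, zero_add, add_zero]
        module
      have hm3 : (2 * a4) • ξ₃₂ ∈ m := comp3 ▸ m.lie_mem hx3 hy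
      have hne : (2 * a4 : ℝ) ≠ 0 := mul_ne_zero two_ne_zero ha4
      have hξ : ξ₃₂ ∈ m := by
        have h' := m.smul_mem (2 * a4)⁻¹ hm3
        rwa [smul_smul, inv_mul_cancel₀ hne, one_smul] at h'
      have compx : ⁅ξ₃₂, y⁆ = a4 • ζ₃ := by
        rw [hyd]
        simp only [lie_add, lie_smul, lie_self, r21, hz11, hb2, hz12, hz13, hz14, hz15,
          smul_zero, zero_add, add_zero]
      have hmz : a4 • ζ₃ ∈ m := compx ▸ m.lie_mem hξ hy
      have hz : ζ₃ ∈ m := by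
        have h' := m.smul_mem a4⁻¹ hmz
        rwa [smul_smul, inv_mul_cancel₀ ha4, one_smul] at h'
      exact hznot hz
    subst ha4
    -- step 2 : the two linear constraints
    have comp1 : ⁅ξ'₃₁ + ζ₃ + ξ₂₁, y⁆ + (a1 + a8) • (ξ'₃₁ + ζ₃ + ξ₂₁) - a8 • (ζ₃ + ζ₂)
        = (a7 - a3) • ξ₃₂ + (a1 + a8) • (ξ'₃₁ + ξ₂₁) := by
      rw [hyd]
      simp only [lie_add, lie_smul, add_lie, lie_self, r1, r2, r22, hz16, hz17, hz19, hz20,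
        r3, r4, r5, r6, hz23, hz24, hz25, r7, r8, r9, hb14, hb15, hb8, hz26,
        smul_zero, zero_add, add_zero, zero_smul]
      module
    have comp2 : ⁅-ξ₃₁ + ξ'₂₁, y⁆ - (a7 - a3) • (ξ'₃₁ + ζ₃ + ξ₂₁) + a7 • (ζ₃ + ζ₂)
        = (a1 + a8) • ξ₃₂ - (a7 - a3) • (ξ'₃₁ + ξ₂₁) := by
      rw [hyd]
      simp only [lie_add, lie_smul, add_lie, neg_lie, lie_self, hz5, hb1, hz6, hz7, hz9,
        r10, hz10, hb16, r11, r12, hb17, r13, r14, hz27,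
        smul_zero, zero_add, add_zero, zero_smul, neg_zero, smul_neg, neg_neg]
      module
    have hE1 : ((a7 - a3) • ξ₃₂ + (a1 + a8) • (ξ'₃₁ + ξ₂₁)) ∈ m :=
      comp1 ▸ sub_mem (add_mem (m.lie_mem hx1 hy) (m.smul_mem _ hx1)) (m.smul_mem _ hx3)
    have hE2 : ((a1 + a8) • ξ₃₂ - (a7 - a3) • (ξ'₃₁ + ξ₂₁)) ∈ m :=
      comp2 ▸ add_mem (sub_mem (m.lie_mem hx2 hy) (m.smul_mem _ hx1)) (m.smul_mem _ hx3)
    have hcomb : (a1 + a8) • ((a7 - a3) • ξ₃₂ + (a1 + a8) • (ξ'₃₁ + ξ₂₁))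
        - (a7 - a3) • ((a1 + a8) • ξ₃₂ - (a7 - a3) • (ξ'₃₁ + ξ₂₁))
        = ((a7 - a3) ^ 2 + (a1 + a8) ^ 2) • (ξ'₃₁ + ξ₂₁) := by module
    have hvm : ((a7 - a3) ^ 2 + (a1 + a8) ^ 2) • (ξ'₃₁ + ξ₂₁) ∈ m :=
      hcomb ▸ sub_mem (m.smul_mem _ hE1) (m.smul_mem _ hE2)
    have hpq : a7 - a3 = 0 ∧ a1 + a8 = 0 := by
      by_contra hne
      have hs : ((a7 - a3) ^ 2 + (a1 + a8) ^ 2 : ℝ) ≠ 0 := by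
        intro h0
        obtain ⟨h1, h2⟩ := (add_eq_zero_iff_of_nonneg (sq_nonneg _) (sq_nonneg _)).mp h0
        exact hne ⟨pow_eq_zero_iff two_ne_zero |>.mp h1, pow_eq_zero_iff two_ne_zero |>.mp h2⟩
      have h' := m.smul_mem ((a7 - a3) ^ 2 + (a1 + a8) ^ 2)⁻¹ hvm
      rw [smul_smul, inv_mul_cancel₀ hs, one_smul] at h'
      exact hvnot h'
    obtain ⟨hfc, hah⟩ := hpq
    have hy' : y = a1 • (ξ₃₁ - ξ'₂₁) + a2 • ξ₃₂ + a3 • (ξ'₃₁ + ξ₂₁) + a5 • ζ₃ + a9 • ζ₂ := by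
      rw [hyd]
      have h7 : a7 = a3 := by linarith
      have h8 : a8 = -a1 := by linarith
      rw [h7, h8]
      module
    rw [hy']
    have m0 : (ξ₃₁ - ξ'₂₁ : g) ∈ S := Submodule.subset_span ⟨0, rfl⟩
    have m1 : (ξ₃₂ : g) ∈ S := Submodule.subset_span ⟨1, rfl⟩
    have m2 : (ξ'₃₁ + ξ₂₁ : g) ∈ S := Submodule.subset_span ⟨2, rfl⟩
    have m3 : (ζ₃ : g) ∈ S := Submodule.subset_span ⟨3, rfl⟩
    have m4 : (ζ₂ : g) ∈ S := Submodule.subset_span ⟨4, rfl⟩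
    exact add_mem (add_mem (add_mem (add_mem (S.smul_mem _ m0) (S.smul_mem _ m1))
      (S.smul_mem _ m2)) (S.smul_mem _ m3)) (S.smul_mem _ m4)
  -- dimension count : m = S
  have hle : m.toSubmodule ≤ S := fun y hy => main y hy
  haveI : FiniteDimensional ℝ S := FiniteDimensional.span_of_finite ℝ (Set.finite_range _)
  have hdim' : Module.finrank ℝ m.toSubmodule = 5 := hdim
  have hrank : Module.finrank ℝ S ≤ 5 := by
    simpa [Set.finrank] using
      finrank_range_le_card (R := ℝ) ![ξ₃₁ - ξ'₂₁, ξ₃₂, ξ'₃₁ + ξ₂₁, ζ₃, ζ₂]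
  have heq : m.toSubmodule = S :=
    Submodule.eq_of_le_of_finrank_le hle (by rw [hdim']; exact hrank)
  have hvS : (ξ'₃₁ + ξ₂₁ : g) ∈ S := Submodule.subset_span ⟨2, rfl⟩
  rw [← heq] at hvS
  exact hvnot hvS
end

section
/- Let f, g, φ, ψ : ℂ → ℂ be entire functions such that φ(w)f(w) + ψ(w)g(w) = 1 for all w ∈ ℂ. Then there exists a bijection Φ : ℂ³ → ℂ³ such that both Φ and its inverse are holomorphic, and Φ(z₁, z₂ + t·f(z₁), z₃ + t·g(z₁)) = Φ(z₁, z₂, z₃) + (0, t, 0) for all t ∈ ℂ and all (z₁, z₂, z₃) ∈ ℂ³; that is, the holomorphic ℂ-action t·(z₁, z₂, z₃) = (z₁, z₂ + t·f(z₁), z₃ + t·g(z₁)) on ℂ³ is conjugate by a biholomorphism of ℂ³ to the translation action t·z = z + (0, t, 0). -/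
/-- Let `f, g, φ, ψ : ℂ → ℂ` be entire functions with
`φ f + ψ g = 1`. Then the holomorphic `ℂ`-action
`t • (z₁, z₂, z₃) = (z₁, z₂ + t f(z₁), z₃ + t g(z₁))` on `ℂ³` is conjugate by a
biholomorphism `Φ` of `ℂ³` to the translation action `t • z = z + (0, t, 0)`. -/
theorem statement10 (f g φ ψ : ℂ → ℂ)
    (hf : Differentiable ℂ f) (hg : Differentiable ℂ g)
    (hφ : Differentiable ℂ φ) (hψ : Differentiable ℂ ψ)
    (h1 : ∀ w : ℂ, φ w * f w + ψ w * g w = 1) :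
    ∃ Φ : (ℂ × ℂ × ℂ) ≃ (ℂ × ℂ × ℂ),
      Differentiable ℂ Φ ∧ Differentiable ℂ Φ.symm ∧
      ∀ (t : ℂ) (z : ℂ × ℂ × ℂ),
        Φ (z.1, z.2.1 + t * f z.1, z.2.2 + t * g z.1) = Φ z + (0, t, 0) := by
  refine ⟨⟨fun z => (z.1, φ z.1 * z.2.1 + ψ z.1 * z.2.2, g z.1 * z.2.1 - f z.1 * z.2.2),
      fun z => (z.1, f z.1 * z.2.1 + ψ z.1 * z.2.2, g z.1 * z.2.1 - φ z.1 * z.2.2),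
      ?_, ?_⟩, ?_, ?_, ?_⟩
  · rintro ⟨a, b, c⟩
    refine Prod.ext rfl (Prod.ext ?_ ?_) <;> simp only
    · linear_combination b * h1 a
    · linear_combination c * h1 a
  · rintro ⟨a, b, c⟩
    refine Prod.ext rfl (Prod.ext ?_ ?_) <;> simp only
    · linear_combination b * h1 a
    · linear_combination c * h1 a
  · exact differentiable_fst.prodMk
      (((hφ.comp differentiable_fst).mul differentiable_snd.fst).add
        ((hψ.comp differentiable_fst).mul differentiable_snd.snd) |>.prodMk
       (((hg.comp differentiable_fst).mul differentiable_snd.fst).sub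
        ((hf.comp differentiable_fst).mul differentiable_snd.snd)))
  · exact differentiable_fst.prodMk
      (((hf.comp differentiable_fst).mul differentiable_snd.fst).add
        ((hψ.comp differentiable_fst).mul differentiable_snd.snd) |>.prodMk
       (((hg.comp differentiable_fst).mul differentiable_snd.fst).sub
        ((hφ.comp differentiable_fst).mul differentiable_snd.snd)))
  · rintro t ⟨a, b, c⟩
    simp only [Equiv.coe_fn_mk, Prod.mk_add_mk, add_zero]
    refine Prod.ext rfl (Prod.ext ?_ ?_) <;> simp only
    · linear_combination t * h1 a
    · ring
end

section
/- Define Φ : ℂ⁵ → ℂ⁵ by Φ(z₁, z₂, z₃, z₄, z₅) = (z₂, z₁, z₃ − z₁z₂, z₄ + 2z₂z₃ − 2z₁z₅ − 2z₂, z₂² − 2z₅). Then Φ is a bijection whose inverse is also a polynomial map, and for every a ∈ ℂ and every (z₁, …, z₅) ∈ ℂ⁵ one has Φ(z₁, z₂ + a, z₃ + a·z₁, z₄ − 2a·z₃ − a²·z₁ + 2a, z₅ + a·z₂ + a²/2) = Φ(z₁, z₂, z₃, z₄, z₅) + (a, 0, 0, 0, 0). -/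
/-- The biregular map `Φ : ℂ⁵ → ℂ⁵`,
`Φ(z₁,…,z₅) = (z₂, z₁, z₃ − z₁z₂, z₄ + 2z₂z₃ − 2z₁z₅ − 2z₂, z₂² − 2z₅)`
(coordinates are `z 0, …, z 4`). -/
noncomputable def statement11Phi : (Fin 5 → ℂ) → (Fin 5 → ℂ) := fun z =>
  ![z 1, z 0, z 2 - z 0 * z 1, z 3 + 2 * z 1 * z 2 - 2 * z 0 * z 4 - 2 * z 1,
    (z 1) ^ 2 - 2 * z 4]

noncomputable def statement11Psi : (Fin 5 → ℂ) → (Fin 5 → ℂ) := fun w =>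
  ![w 1, w 0, w 2 + w 0 * w 1,
    w 3 - 2 * w 0 * w 2 - (w 0) ^ 2 * w 1 - w 1 * w 4 + 2 * w 0,
    ((w 0) ^ 2 - w 4) / 2]

lemma statement11_left : Function.LeftInverse statement11Psi statement11Phi := by
  intro z
  funext i
  fin_cases i <;>
    simp [statement11Phi, statement11Psi] <;> ring

lemma statement11_right : Function.RightInverse statement11Psi statement11Phi := by
  intro z
  funext i
  fin_cases i <;>
    simp [statement11Phi, statement11Psi] <;> ring

/-- The map `Φ` above is a bijection whose inverse is also a polynomial
map, and it conjugates the one-parameter group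
`S_a(z) = (z₁, z₂ + a, z₃ + a z₁, z₄ − 2a z₃ − a² z₁ + 2a, z₅ + a z₂ + a²/2)` to the
translation action in the first coordinate: `Φ(S_a(z)) = Φ(z) + (a, 0, 0, 0, 0)`. -/
theorem statement11 :
    (Function.Bijective statement11Phi ∧
      ∃ Ψ : (Fin 5 → ℂ) → (Fin 5 → ℂ),
        (∀ i : Fin 5, ∃ p : MvPolynomial (Fin 5) ℂ,
          ∀ z : Fin 5 → ℂ, Ψ z i = MvPolynomial.eval z p) ∧
        Function.LeftInverse Ψ statement11Phi ∧
        Function.RightInverse Ψ statement11Phi) ∧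
    ∀ (a : ℂ) (z : Fin 5 → ℂ),
      statement11Phi
        ![z 0, z 1 + a, z 2 + a * z 0, z 3 - 2 * a * z 2 - a ^ 2 * z 0 + 2 * a,
          z 4 + a * z 1 + a ^ 2 / 2]
        = statement11Phi z + ![a, 0, 0, 0, 0] := by
  refine ⟨⟨⟨statement11_left.injective, statement11_right.surjective⟩,
    statement11Psi, ?_, statement11_left, statement11_right⟩, ?_⟩
  · intro i
    fin_cases i
    · exact ⟨MvPolynomial.X 1, fun z => by simp [statement11Psi]⟩
    · exact ⟨MvPolynomial.X 0, fun z => by simp [statement11Psi]⟩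
    · exact ⟨MvPolynomial.X 2 + MvPolynomial.X 0 * MvPolynomial.X 1,
        fun z => by simp [statement11Psi]⟩
    · exact ⟨MvPolynomial.X 3 - 2 * MvPolynomial.X 0 * MvPolynomial.X 2 -
          (MvPolynomial.X 0) ^ 2 * MvPolynomial.X 1 -
          MvPolynomial.X 1 * MvPolynomial.X 4 + 2 * MvPolynomial.X 0,
        fun z => by simp [statement11Psi]⟩
    · exact ⟨MvPolynomial.C (1 / 2 : ℂ) * ((MvPolynomial.X 0) ^ 2 - MvPolynomial.X 4),
        fun z => by simp [statement11Psi]; ring⟩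
  · intro a z
    funext i
    fin_cases i <;>
      simp [statement11Phi] <;> ring
end

section
/- Let a, b, c ∈ ℂ and let z₁₁, z₁₂, z₁₃, z₂₂, z₂₃, z₃₃ ∈ ℂ. If b·z₁₁ + a = 0, a·z₁₁ − b = 0, 2b·z₁₂ + b²·z₁₁ + a·b − 2c = 0, a·z₁₂ + b·z₁₃ + a·b·z₁₁ + (a² − b²)/2 = 0, and 2a·z₁₃ + a²·z₁₁ − a·b − 2(a + c) = 0, then a = 0, b = 0, and c = 0. Equivalently: the group N_Γ^ℂ of affine transformations of the space Sym(3, ℂ) of complex symmetric 3×3 matrices given by (a,b,c) · (z_{kl}) = the symmetric matrix with entries z₁₁, z₁₂ + b·z₁₁ + a, z₁₃ + a·z₁₁ − b, z₂₂ + 2b·z₁₂ + b²·z₁₁ + ab − 2c, z₂₃ + a·z₁₂ + b·z₁₃ + ab·z₁₁ + (a² − b²)/2, z₃₃ + 2a·z₁₃ + a²·z₁₁ − ab − 2(a + c), acts freely on Sym(3, ℂ). -/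
/-- For all `a, b, c ∈ ℂ` and all entries `z₁₁, z₁₂, z₁₃, z₂₂, z₂₃, z₃₃`
of a complex symmetric 3×3 matrix, if
`b z₁₁ + a = 0`, `a z₁₁ − b = 0`, `2b z₁₂ + b² z₁₁ + ab − 2c = 0`,
`a z₁₂ + b z₁₃ + ab z₁₁ + (a² − b²)/2 = 0`, and `2a z₁₃ + a² z₁₁ − ab − 2(a + c) = 0`,
then `a = b = c = 0`. Equivalently, the complexified unipotent group `N_Γ^ℂ` acts freely on
`Sym(3, ℂ)` by the affine transformations described in the paper. -/
theorem statement12 (a b c : ℂ) (z₁₁ z₁₂ z₁₃ z₂₂ z₂₃ z₃₃ : ℂ)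
    (h1 : b * z₁₁ + a = 0)
    (h2 : a * z₁₁ - b = 0)
    (h3 : 2 * b * z₁₂ + b ^ 2 * z₁₁ + a * b - 2 * c = 0)
    (h4 : a * z₁₂ + b * z₁₃ + a * b * z₁₁ + (a ^ 2 - b ^ 2) / 2 = 0)
    (h5 : 2 * a * z₁₃ + a ^ 2 * z₁₁ - a * b - 2 * (a + c) = 0) :
    a = 0 ∧ b = 0 ∧ c = 0 := by
  have hab : a ^ 2 + b ^ 2 = 0 := by linear_combination a * h1 - b * h2
  have hbz12 : b * z₁₂ = c := by linear_combination (1/2 : ℂ) * h3 - (b/2) * h1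
  have haz13 : a * z₁₃ = a + c := by linear_combination (1/2 : ℂ) * h5 - (a/2) * h2
  have h4' : a * z₁₂ + b * z₁₃ = 0 := by
    linear_combination h4 - b * h2 - (1/2 : ℂ) * hab
  have ha2 : a ^ 2 = 0 := by
    linear_combination (-a) * haz13 + a * hbz12 - b * h4' + z₁₃ * hab
  have ha : a = 0 := by
    have := pow_eq_zero_iff (n := 2) (by norm_num) |>.mp ha2
    exact this
  have hb : b = 0 := by
    have hb2 : b ^ 2 = 0 := by linear_combination hab - ha2
    exact pow_eq_zero_iff (n := 2) (by norm_num) |>.mp hb2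
  refine ⟨ha, hb, ?_⟩
  rw [hb] at hbz12
  simpa using hbz12.symm
end

section
/- For every (w₁, w₂) ∈ ℂ², the three vectors v₁ = (2i·w₁, 1, 0), v₂ = (2(w₁ + w₂), i, i), v₃ = (1, 0, 0) in ℂ³ are linearly independent over ℂ; consequently their real span V ⊂ ℂ³ satisfies dim_ℝ V = 3 and V ∩ i·V = {0}, i.e. V is a maximal totally real subspace of ℂ³. -/
open Complex

/-- For every `(w₁, w₂) ∈ ℂ²`, the vectors `v₁ = (2i w₁, 1, 0)`,
`v₂ = (2(w₁ + w₂), i, i)`, `v₃ = (1, 0, 0)` in `ℂ³` are linearly independent over `ℂ`;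
consequently their real span `V` satisfies `dim_ℝ V = 3` and `V ∩ i·V = {0}`, i.e. `V` is
a maximal totally real subspace of `ℂ³`. -/
theorem statement13 (w₁ w₂ : ℂ) :
    LinearIndependent ℂ
      ![![2 * I * w₁, 1, 0], ![2 * (w₁ + w₂), I, I], ![(1 : ℂ), 0, 0]] ∧
    Module.finrank ℝ
      (Submodule.span ℝ
        (Set.range ![![2 * I * w₁, 1, 0], ![2 * (w₁ + w₂), I, I], ![(1 : ℂ), 0, 0]])) = 3 ∧
    Submodule.span ℝ
        (Set.range ![![2 * I * w₁, 1, 0], ![2 * (w₁ + w₂), I, I], ![(1 : ℂ), 0, 0]]) ⊓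
      (Submodule.span ℝ
        (Set.range ![![2 * I * w₁, 1, 0], ![2 * (w₁ + w₂), I, I], ![(1 : ℂ), 0, 0]])).map
        ((LinearMap.lsmul ℂ (Fin 3 → ℂ) I).restrictScalars ℝ) = ⊥ := by
  set v : Fin 3 → Fin 3 → ℂ :=
    ![![2 * I * w₁, 1, 0], ![2 * (w₁ + w₂), I, I], ![(1 : ℂ), 0, 0]] with hv
  have hLI : LinearIndependent ℂ v := by
    rw [Fintype.linearIndependent_iff]
    intro g hg
    have h0 := congrFun hg 0
    have h1 := congrFun hg 1
    have h2 := congrFun hg 2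
    simp [hv, Fin.sum_univ_three] at h0 h1 h2
    have hg1 : g 1 = 0 := h2
    have hg0 : g 0 = 0 := by
      rw [hg1] at h1; simpa using h1
    have hg2 : g 2 = 0 := by
      rw [hg0, hg1] at h0; simpa using h0
    intro i; fin_cases i <;> assumption
  have hinj : Function.Injective fun r : ℝ => r • (1 : ℂ) := by
    intro a b h
    simp only [real_smul, mul_one] at h
    exact_mod_cast h
  have hLIR : LinearIndependent ℝ v := hLI.restrict_scalars hinj
  refine ⟨hLI, ?_, ?_⟩
  · rw [finrank_span_eq_card hLIR]
    simp
  · rw [eq_bot_iff]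
    intro x hx
    obtain ⟨hx1, hx2⟩ := hx
    obtain ⟨y, hy, hyx⟩ := hx2
    obtain ⟨a, ha⟩ := (Submodule.mem_span_range_iff_exists_fun ℝ).mp hx1
    obtain ⟨d, hd⟩ := (Submodule.mem_span_range_iff_exists_fun ℝ).mp hy
    have hyx' : (I • y : Fin 3 → ℂ) = x := hyx
    have hsm : ∀ (r : ℝ) (u : Fin 3 → ℂ), ((r : ℂ)) • u = r • u := fun r u => by
      ext j
      simp [Pi.smul_apply, Complex.real_smul, smul_eq_mul]
    have key : ∑ i, ((a i : ℂ) - I * (d i : ℂ)) • v i = 0 := by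
      have e1 : ∑ i, ((a i : ℂ)) • v i = x := by
        rw [← ha]; exact Finset.sum_congr rfl fun i _ => hsm _ _
      have e2 : ∑ i, (I * (d i : ℂ)) • v i = I • y := by
        rw [← hd, Finset.smul_sum]
        exact Finset.sum_congr rfl fun i _ => by rw [mul_smul, hsm]
      have : ∑ i, ((a i : ℂ)) • v i - ∑ i, (I * (d i : ℂ)) • v i = 0 := by
        rw [e1, e2, hyx', sub_self]
      simpa [sub_smul, Finset.sum_sub_distrib] using this
    have hcoef := Fintype.linearIndependent_iff.mp hLI _ key
    have hzero : ∀ i, a i = 0 := by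
      intro i
      have := hcoef i
      have hre := congrArg Complex.re this
      simpa using hre
    have : x = 0 := by
      rw [← ha]
      simp [hzero]
    simp [this]
end
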